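/- arXiv:1710.10043 — 6 statements merged into one kernel-verified Lean document; each statement's English description precedes it below -/
import Mathlib

section
/- Let κ be a regular uncountable cardinal and let F be a filter on κ of size κ, with enumeration X⃗ = ⟨X_α | α < κ⟩ of F. Then F is normal (i.e., for every κ-sequence of elements of F, the diagonal intersection is stationary in κ) if and only if the diagonal intersection △X⃗ is stationary in κ. -/
universe u

open Cardinal Set

/-- `a` is a limit of elements of `C` (an accumulation point of `C` from below). -/
def IsAccPt' {α : Type u} [LinearOrder α] (C : Set α) (a : α) : Prop :=
  (∃ b, b < a) ∧ ∀ b < a, ∃ c ∈ C, b < c ∧ c < a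

/-- `C` is closed and unbounded (club) in the order `α`. -/
def IsClubIn {α : Type u} [LinearOrder α] (C : Set α) : Prop :=
  (∀ a, IsAccPt' C a → a ∈ C) ∧ ∀ a, ∃ c ∈ C, a < c

/-- `S` is stationary: it meets every club subset. -/
def IsStatIn {α : Type u} [LinearOrder α] (S : Set α) : Prop :=
  ∀ C : Set α, IsClubIn C → (S ∩ C).Nonempty

/-- The diagonal intersection of a sequence of subsets. -/
def diagInter {α : Type u} [LinearOrder α] (X : α → Set α) : Set α :=
  {b | ∀ a < b, b ∈ X a}

/-- `α` is (the order type of) an infinite cardinal `κ`: a well-ordered type in which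
every proper initial segment has strictly smaller cardinality. -/
def IsCardType (α : Type u) [LinearOrder α] : Prop :=
  IsWellOrder α (· < ·) ∧ ℵ₀ ≤ #α ∧ ∀ a : α, #(Iio a) < #α

/-- A filter on `κ` in the sense of Holy–Schlicht: a family of subsets of `κ`
all of whose finite intersections have full cardinality `κ`. -/
def IsFilterOn {α : Type u} (F : Set (Set α)) : Prop :=
  ∀ (n : ℕ) (A : Fin n → Set α), (∀ i, A i ∈ F) → #(⋂ i, A i) = #α

section Aux
variable {α : Type u} [LinearOrder α]

/-- Every set of cardinality less than `#α` is strictly bounded above. -/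
lemma bdd_of_mk_lt (hreg : (#α).IsRegular)
    (hsmall : ∀ a : α, #(Iio a) < #α)
    (s : Set α) (hs : #s < #α) : ∃ b : α, ∀ x ∈ s, x < b := by
  by_contra h
  push_neg at h
  have hcover : (univ : Set α) ⊆ ⋃ x ∈ s, Iic x := by
    intro y _
    obtain ⟨x, hx, hxy⟩ := h y
    exact mem_biUnion hx hxy
  have h1 : #α ≤ #(⋃ x ∈ s, Iic x) := by
    have := mk_le_mk_of_subset hcover
    simpa using this
  have hIic : ∀ x : α, #(Iic x) < #α := by
    intro x
    have : (Iic x : Set α) = insert x (Iio x) := Iio_insert.symm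
    rw [this]
    calc #(insert x (Iio x) : Set α) ≤ #(Iio x) + 1 := mk_insert_le
    _ < #α := add_lt_of_lt hreg.1 (hsmall x) (one_lt_aleph0.trans_le hreg.1)
  have h2 : #(⋃ x ∈ s, Iic x) < #α := by
    apply lt_of_le_of_lt (mk_biUnion_le _ s)
    apply mul_lt_of_lt hreg.1 hs
    exact iSup_lt_of_isRegular hreg hs fun i => hIic i
  exact absurd (h1.trans_lt h2) (lt_irrefl _)

/-- A strictly increasing ω-sequence has a least strict upper bound, which is a limit
of the sequence. -/
lemma exists_lub_of_strictMono (hwo : IsWellOrder α (· < ·)) (hreg : (#α).IsRegular)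
    (hunc : ℵ₀ < #α) (hsmall : ∀ a : α, #(Iio a) < #α)
    (f : ℕ → α) (hf : StrictMono f) :
    ∃ c : α, (∀ n, f n < c) ∧ ∀ b < c, ∃ n, b < f n := by
  obtain ⟨b, hb⟩ := bdd_of_mk_lt hreg hsmall (range f)
    (((countable_range f).le_aleph0).trans_lt hunc)
  have hne : {b : α | ∀ n, f n < b}.Nonempty := ⟨b, fun n => hb _ (mem_range_self n)⟩
  have wf : WellFounded ((· < ·) : α → α → Prop) := hwo.wf
  refine ⟨wf.min _ hne, fun n => wf.min_mem _ hne n, fun x hx => ?_⟩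
  by_contra hcon
  push_neg at hcon
  have hxub : x ∈ {b : α | ∀ n, f n < b} :=
    fun n => (hf (Nat.lt_succ_self n)).trans_le (hcon (n+1))
  exact wf.not_lt_min _ hxub hx

/-- The intersection of two clubs is a club. -/
lemma isClubIn_inter (hwo : IsWellOrder α (· < ·)) (hreg : (#α).IsRegular)
    (hunc : ℵ₀ < #α) (hsmall : ∀ a : α, #(Iio a) < #α)
    {C D : Set α} (hC : IsClubIn C) (hD : IsClubIn D) : IsClubIn (C ∩ D) := by
  constructor
  · intro a ha
    exact ⟨hC.1 a ⟨ha.1, fun b hb => (ha.2 b hb).imp fun c ⟨hc, h⟩ => ⟨hc.1, h⟩⟩,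
           hD.1 a ⟨ha.1, fun b hb => (ha.2 b hb).imp fun c ⟨hc, h⟩ => ⟨hc.2, h⟩⟩⟩
  · intro a
    choose nc hncC hnc using hC.2
    choose nd hndD hnd using hD.2
    let f : ℕ → α := fun n => Nat.rec a (fun n x => if n % 2 = 0 then nc x else nd x) n
    have hf0 : f 0 = a := rfl
    have hsucc : ∀ n, f (n+1) = if n % 2 = 0 then nc (f n) else nd (f n) := fun n => rfl
    have hmono : StrictMono f := by
      apply strictMono_nat_of_lt_succ
      intro n
      rw [hsucc n]
      split
      · exact hnc _
      · exact hnd _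
    obtain ⟨c, hub, hlim⟩ := exists_lub_of_strictMono hwo hreg hunc hsmall f hmono
    have hmemC : c ∈ C := by
      apply hC.1
      refine ⟨⟨a, hf0 ▸ hub 0⟩, fun b hb => ?_⟩
      obtain ⟨n, hn⟩ := hlim b hb
      refine ⟨f (2*n+1), ?_, ?_, hub (2*n+1)⟩
      · rw [hsucc (2*n), if_pos (by omega)]; exact hncC _
      · exact hn.trans_le (hmono.monotone (show n ≤ 2*n+1 by omega))
    have hmemD : c ∈ D := by
      apply hD.1
      refine ⟨⟨a, hf0 ▸ hub 0⟩, fun b hb => ?_⟩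
      obtain ⟨n, hn⟩ := hlim b hb
      refine ⟨f (2*n+2), ?_, ?_, hub (2*n+2)⟩
      · rw [hsucc (2*n+1), if_neg (by omega)]; exact hndD _
      · exact hn.trans_le (hmono.monotone (show n ≤ 2*n+2 by omega))
    exact ⟨c, ⟨hmemC, hmemD⟩, hf0 ▸ hub 0⟩

/-- The set of closure points of a function `g` is a club. -/
lemma isClubIn_closurePts (hwo : IsWellOrder α (· < ·)) (hreg : (#α).IsRegular)
    (hunc : ℵ₀ < #α) (hsmall : ∀ a : α, #(Iio a) < #α) (g : α → α) :
    IsClubIn {b : α | ∀ x < b, g x < b} := by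
  constructor
  · intro a ha x hx
    obtain ⟨c, hc, hxc, hca⟩ := ha.2 x hx
    exact (hc x hxc).trans hca
  · intro a
    have next : ∀ x : α, ∃ y, x < y ∧ ∀ z < x, g z < y := by
      intro x
      have hins : #(insert x (g '' Iio x) : Set α) < #α := by
        calc #(insert x (g '' Iio x) : Set α) ≤ #(g '' Iio x) + 1 := mk_insert_le
        _ ≤ #(Iio x) + 1 := add_le_add_left mk_image_le 1
        _ < #α := add_lt_of_lt hreg.1 (hsmall x) (one_lt_aleph0.trans_le hreg.1)
      obtain ⟨b, hb⟩ := bdd_of_mk_lt hreg hsmall (insert x (g '' Iio x)) hins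
      exact ⟨b, hb x (mem_insert _ _),
        fun z hz => hb _ (mem_insert_of_mem _ ⟨z, hz, rfl⟩)⟩
    choose nx hlt hdom using next
    let f : ℕ → α := fun n => Nat.rec a (fun _ x => nx x) n
    have hf0 : f 0 = a := rfl
    have hsucc : ∀ n, f (n+1) = nx (f n) := fun n => rfl
    have hmono : StrictMono f := by
      apply strictMono_nat_of_lt_succ
      intro n
      rw [hsucc n]; exact hlt _
    obtain ⟨c, hub, hlim⟩ := exists_lub_of_strictMono hwo hreg hunc hsmall f hmono
    refine ⟨c, fun x hx => ?_, hf0 ▸ hub 0⟩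
    obtain ⟨n, hn⟩ := hlim x hx
    have : g x < f (n+1) := by rw [hsucc n]; exact hdom (f n) x hn
    exact this.trans (hub (n+1))

end Aux

/-- **Lemma 2.6** (Holy–Schlicht). A filter `F` of size `κ` on a regular uncountable
cardinal `κ`, with enumeration `⟨X_α | α < κ⟩`, is normal (every diagonal intersection of a
`κ`-sequence of its elements is stationary) if and only if the diagonal intersection of the
enumeration is stationary. -/
theorem normal_iff_diagonal_stationary {α : Type u} [LinearOrder α]
    (hcard : IsCardType α) (hreg : (#α).IsRegular) (hunc : ℵ₀ < #α)
    (F : Set (Set α)) (hF : IsFilterOn F) (hsize : #F = #α)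
    (X : α → Set α) (hmem : ∀ a, X a ∈ F) (hsurj : ∀ A ∈ F, ∃ a, X a = A) :
    (∀ Y : α → Set α, (∀ a, Y a ∈ F) → IsStatIn (diagInter Y)) ↔
      IsStatIn (diagInter X) := by
  obtain ⟨hwo, _, hsmall⟩ := hcard
  constructor
  · intro h
    exact h X hmem
  · intro hstat Y hY C hC
    choose g hg using fun a => hsurj (Y a) (hY a)
    have hEclub := isClubIn_closurePts hwo hreg hunc hsmall g
    obtain ⟨b, hbX, hbE, hbC⟩ :=
      hstat _ (isClubIn_inter hwo hreg hunc hsmall hEclub hC)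
    refine ⟨b, ?_, hbC⟩
    intro a ha
    have h1 : g a < b := hbE a ha
    have h2 : b ∈ X (g a) := hbX (g a) h1
    rwa [hg a] at h2
end

section
/- Let κ be a weakly compact cardinal. Then κ has the filter extension property: for every <κ-complete filter F on κ of size at most κ and every X ⊆ P(κ) of size at most κ, there is a <κ-complete filter F̄ ⊇ F that measures every element of X. -/
universe u

open Cardinal Set

/-- A `<κ`-complete filter on `κ`: every intersection of fewer than `κ` many members
has cardinality `κ`. -/
def IsCompleteFilterOn {α : Type u} (F : Set (Set α)) : Prop :=
  ∀ (ι : Type u) (A : ι → Set α), #ι < #α → (∀ i, A i ∈ F) → #(⋂ i, A i) = #α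

/-- `g : κ → 2` is a cofinal branch through the tree `T` of binary sequences on `κ`
(nodes at level `a` are represented by functions, identified up to their values below `a`). -/
def IsBranchThrough {α : Type u} [LinearOrder α] (T : Set (α × (α → Bool)))
    (g : α → Bool) : Prop :=
  ∀ a : α, ∃ t, (a, t) ∈ T ∧ ∀ c < a, t c = g c

/-- The tree property for `κ`, formulated for trees of binary sequences on `κ`:
every downward-closed tree with nonempty levels has a cofinal branch. -/
def HasTreeProperty (α : Type u) [LinearOrder α] : Prop :=
  ∀ T : Set (α × (α → Bool)),
    (∀ p ∈ T, ∀ a ≤ p.1, ∀ t : α → Bool, (∀ c < a, t c = p.2 c) → (a, t) ∈ T) →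
    (∀ a : α, ∃ t, (a, t) ∈ T) →
    ∃ g, IsBranchThrough T g

/-! ### Auxiliary lemmas -/

lemma wcfe_mk_eq_of_subset {α : Type u} {s t : Set α} (h : s ⊆ t) (hs : #s = #α) : #t = #α :=
  le_antisymm (Cardinal.mk_set_le t) (hs ▸ Cardinal.mk_le_mk_of_subset h)

lemma wcfe_pigeonhole {α : Type u} (hreg : (#α).IsRegular) {ι : Type u} (hι : #ι < #α)
    (f : ι → Set α) (h : #(⋃ i, f i) = #α) : ∃ i, #(f i) = #α := by
  by_contra hc
  push_neg at hc
  have hlt : ∀ i, #(f i) < #α := fun i => lt_of_le_of_ne (Cardinal.mk_set_le _) (hc i)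
  have h2 : (⨆ i, #(f i)) < #α := Cardinal.iSup_lt_of_isRegular hreg hι hlt
  have h3 : #ι * (⨆ i, #(f i)) < #α := Cardinal.mul_lt_of_lt hreg.aleph0_le hι h2
  exact absurd (h ▸ Cardinal.mk_iUnion_le f) (not_le.mpr h3)

lemma wcfe_mk_Iic_lt {α : Type u} [LinearOrder α] (hinf : ℵ₀ ≤ #α)
    (hIio : ∀ a : α, #(Iio a) < #α) (a : α) : #(Iic a) < #α := by
  have h1 : (Iic a : Set α) = insert a (Iio a) := by
    ext x; simp [le_iff_lt_or_eq, or_comm]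
  rw [h1]
  calc #(insert a (Iio a) : Set α) ≤ #(Iio a) + 1 := Cardinal.mk_insert_le
    _ < #α := Cardinal.add_lt_of_lt hinf (hIio a) (lt_of_lt_of_le Cardinal.one_lt_aleph0 hinf)

lemma wcfe_bound {α : Type u} [LinearOrder α] (hreg : (#α).IsRegular)
    (hIio : ∀ a : α, #(Iio a) < #α) {ι : Type u} (hι : #ι < #α)
    (f : ι → α) : ∃ a, ∀ i, f i < a := by
  by_contra hc
  push_neg at hc
  have hcover : (univ : Set α) ⊆ ⋃ i, Iic (f i) := by
    intro x _
    obtain ⟨i, hi⟩ := hc x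
    exact mem_iUnion.mpr ⟨i, hi⟩
  have hU : #(⋃ i, Iic (f i)) = #α := wcfe_mk_eq_of_subset hcover Cardinal.mk_univ
  obtain ⟨i, hi⟩ := wcfe_pigeonhole hreg hι _ hU
  exact absurd hi (ne_of_lt (wcfe_mk_Iic_lt hreg.aleph0_le hIio (f i)))

lemma wcfe_complete_insert {α : Type u} {F : Set (Set α)} (hF : IsCompleteFilterOn F) :
    IsCompleteFilterOn (insert Set.univ F) := by
  intro ι A hι hA
  have key : (⋂ i, A i) = ⋂ i : {i // A i ∈ F}, A i.1 := by
    ext x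
    simp only [mem_iInter]
    refine ⟨fun h i => h i.1, fun h i => ?_⟩
    rcases mem_insert_iff.mp (hA i) with h1 | h2
    · rw [h1]; trivial
    · exact h ⟨i, h2⟩
  rw [key]
  exact hF _ _ (lt_of_le_of_lt (Cardinal.mk_subtype_le _) hι) fun i => i.2

/-- The intersection coded by a node of the tree. -/
def wcfeS {α : Type u} [LinearOrder α] (Ae Bx : α → Set α) (a : α) (t : α → Bool) : Set α :=
  ⋂ i : Iio a, (Ae i.1 ∩ (bif t i.1 then (Bx i.1)ᶜ else Bx i.1))

lemma mem_wcfeS {α : Type u} [LinearOrder α] {Ae Bx : α → Set α} {a : α} {t : α → Bool}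
    {x : α} :
    x ∈ wcfeS Ae Bx a t ↔
      ∀ i : Iio a, x ∈ Ae i.1 ∧ x ∈ (bif t i.1 then (Bx i.1)ᶜ else Bx i.1) := by
  simp [wcfeS, mem_iInter, mem_inter_iff]

/-- **Proposition 2.9** (Holy–Schlicht). Every weakly compact cardinal (inaccessible with
the tree property) has the filter extension property: every `<κ`-complete filter of size at
most `κ` extends to a `<κ`-complete filter measuring any prescribed `κ`-sized family of
subsets of `κ`. -/
theorem weakly_compact_filter_extension {α : Type u} [LinearOrder α]
    (hcard : IsCardType α) (hinacc : (#α).IsInaccessible) (htree : HasTreeProperty α)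
    (F : Set (Set α)) (hF : IsCompleteFilterOn F) (hFsize : #F ≤ #α)
    (X : Set (Set α)) (hX : #X ≤ #α) :
    ∃ G : Set (Set α), F ⊆ G ∧ IsCompleteFilterOn G ∧
      ∀ A ∈ X, A ∈ G ∨ Aᶜ ∈ G := by
  classical
  obtain ⟨-, hinf, hIio⟩ := hcard
  obtain ⟨hreg, hlim⟩ := And.intro hinacc.isRegular hinacc.isStrongLimit
  -- enumerate `F` (together with `univ`) by `α`
  obtain ⟨Ae, hAe1, hAe2⟩ :
      ∃ Ae : α → Set α, (∀ i, Ae i ∈ insert Set.univ F) ∧ ∀ s ∈ F, ∃ i, Ae i = s := by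
    rcases F.eq_empty_or_nonempty with hFe | hFne
    · exact ⟨fun _ => Set.univ, fun _ => mem_insert _ _, by simp [hFe]⟩
    · have : Nonempty F := hFne.to_subtype
      obtain ⟨e⟩ := (Cardinal.le_def _ _).mp hFsize
      refine ⟨fun a => ((Function.invFun (⇑e) a : F) : Set α),
        fun i => mem_insert_of_mem _ (Function.invFun (⇑e) i).2, fun s hs => ?_⟩
      obtain ⟨a, ha⟩ := Function.invFun_surjective e.injective ⟨s, hs⟩
      exact ⟨a, congrArg Subtype.val ha⟩
  -- enumerate `X` by `α`
  obtain ⟨Bx, hBx⟩ : ∃ Bx : α → Set α, ∀ s ∈ X, ∃ i, Bx i = s := by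
    rcases X.eq_empty_or_nonempty with hXe | hXne
    · exact ⟨fun _ => Set.univ, by simp [hXe]⟩
    · have : Nonempty X := hXne.to_subtype
      obtain ⟨e⟩ := (Cardinal.le_def _ _).mp hX
      refine ⟨fun a => ((Function.invFun (⇑e) a : X) : Set α), fun s hs => ?_⟩
      obtain ⟨a, ha⟩ := Function.invFun_surjective e.injective ⟨s, hs⟩
      exact ⟨a, congrArg Subtype.val ha⟩
  have hFins : IsCompleteFilterOn (insert Set.univ F) := wcfe_complete_insert hF
  -- the tree
  set T : Set (α × (α → Bool)) := {p | #(wcfeS Ae Bx p.1 p.2) = #α} with hT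
  -- downward closure
  have hdc : ∀ p ∈ T, ∀ a ≤ p.1, ∀ t : α → Bool, (∀ c < a, t c = p.2 c) → (a, t) ∈ T := by
    intro p hp a ha t ht
    have hp' : #(wcfeS Ae Bx p.1 p.2) = #α := hp
    show #(wcfeS Ae Bx a t) = #α
    refine wcfe_mk_eq_of_subset (fun x hx => ?_) hp'
    refine mem_wcfeS.mpr fun i => ?_
    have h := mem_wcfeS.mp hx ⟨i.1, lt_of_lt_of_le i.2 ha⟩
    rwa [ht i.1 i.2]
  -- levels are nonempty
  have hlev : ∀ a : α, ∃ t, (a, t) ∈ T := by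
    intro a
    have hY : #(⋂ i : Iio a, Ae i.1) = #α :=
      hFins _ _ (hIio a) (fun i => hAe1 i.1)
    have hcover : (⋂ i : Iio a, Ae i.1) ⊆ ⋃ s : (Iio a → Bool),
        ((⋂ i : Iio a, Ae i.1) ∩ ⋂ i : Iio a, (bif s i then (Bx i.1)ᶜ else Bx i.1)) := by
      intro x hx
      refine mem_iUnion.mpr ⟨fun i => if x ∈ Bx i.1 then false else true, hx, ?_⟩
      refine mem_iInter.mpr fun i => ?_
      by_cases h : x ∈ Bx i.1 <;> simp [h]
    have hUcard : #(⋃ s : (Iio a → Bool),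
        ((⋂ i : Iio a, Ae i.1) ∩ ⋂ i : Iio a, (bif s i then (Bx i.1)ᶜ else Bx i.1))) = #α :=
      wcfe_mk_eq_of_subset hcover hY
    have hidx : #(Iio a → Bool) < #α := by
      have h2 : #(↥(Iio a) → Bool) = 2 ^ #(Iio a) := by
        rw [Cardinal.mk_arrow]
        simp
      rw [h2]
      exact hlim.two_power_lt (hIio a)
    obtain ⟨s, hs⟩ := wcfe_pigeonhole hreg hidx _ hUcard
    refine ⟨fun i => if h : i < a then s ⟨i, h⟩ else false, ?_⟩
    show #(wcfeS Ae Bx a _) = #α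
    have heq : wcfeS Ae Bx a (fun i => if h : i < a then s ⟨i, h⟩ else false)
        = (⋂ i : Iio a, Ae i.1) ∩ ⋂ i : Iio a, (bif s i then (Bx i.1)ᶜ else Bx i.1) := by
      ext x
      simp only [mem_wcfeS, mem_inter_iff, mem_iInter]
      constructor
      · intro h
        refine ⟨fun i => (h i).1, fun i => ?_⟩
        have h2 := (h i).2
        rwa [dif_pos (show (i : α) < a from i.2)] at h2
      · intro h i
        refine ⟨h.1 i, ?_⟩
        rw [dif_pos (show (i : α) < a from i.2)]
        exact h.2 i
    rw [heq]
    exact hs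
  -- apply the tree property
  obtain ⟨g, hg⟩ := htree T hdc hlev
  refine ⟨F ∪ Set.range (fun i => bif g i then (Bx i)ᶜ else Bx i),
    subset_union_left, ?_, ?_⟩
  · -- `<κ`-completeness of the extension
    intro ι C hι hC
    have hsub : ∀ j, ∃ i : α, Ae i ∩ (bif g i then (Bx i)ᶜ else Bx i) ⊆ C j := by
      intro j
      rcases hC j with hj | hj
      · obtain ⟨i, hi⟩ := hAe2 _ hj
        exact ⟨i, by rw [hi]; exact inter_subset_left⟩
      · obtain ⟨i, hi⟩ := hj
        exact ⟨i, by rw [← hi]; exact inter_subset_right⟩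
    choose idx hidx using hsub
    obtain ⟨a, ha⟩ := wcfe_bound hreg hIio hι idx
    obtain ⟨t, htT, htg⟩ := hg a
    have htT' : #(wcfeS Ae Bx a t) = #α := htT
    refine wcfe_mk_eq_of_subset (fun x hx => ?_) htT'
    refine mem_iInter.mpr fun j => ?_
    apply hidx j
    have h := mem_wcfeS.mp hx ⟨idx j, ha j⟩
    rw [htg (idx j) (ha j)] at h
    exact ⟨h.1, h.2⟩
  · -- the extension measures every element of `X`
    intro A hA
    obtain ⟨i, hi⟩ := hBx A hA
    cases hgi : g i with
    | false =>
      exact Or.inl (mem_union_right _ ⟨i, by simp [hgi, hi]⟩)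
    | true =>
      exact Or.inr (mem_union_right _ ⟨i, by simp [hgi, hi]⟩)
end

section
/- Let κ be a regular uncountable cardinal and let S = {α < κ | cof(α) = ω}. Suppose M is a weak κ-model (a transitive set of size κ with κ+1 ⊆ M modelling ZFC minus powerset) with S ∈ M, in which κ is inaccessible, and suppose F is a normal filter on κ with S ∈ F that measures P(κ) ∩ M. Then the ultrapower of M by F ∩ M is well-founded and κ is represented by the identity function, and in the ultrapower κ has cofinality ω; hence there is no such F when the ultrapower must model that κ is inaccessible — i.e., the normal filter extension property fails at κ. -/
universe u

open Cardinal Set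

/-- A normal filter: any diagonal intersection of a `κ`-sequence of members is stationary. -/
def IsNormalFilterOn {α : Type u} [LinearOrder α] (F : Set (Set α)) : Prop :=
  IsFilterOn F ∧ ∀ Y : α → Set α, (∀ a, Y a ∈ F) → IsStatIn (diagInter Y)

/-! ### Auxiliary development -/

/-- The set of points admitting a countable cofinal "ladder" (cofinality `ω` points). -/
def omegaCof (α : Type u) [LinearOrder α] : Set α :=
  {b | ∃ c : ℕ → α, (∀ n, c n < b) ∧ ∀ x, x < b → ∃ n, x < c n}

section Aux

variable {α : Type u} [LinearOrder α]

/-- Any small subset of a regular cardinal type has a strict upper bound. -/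
lemma aux_ub (hcard : IsCardType α) (hreg : (#α).IsRegular)
    (B : Set α) (hB : #B < #α) : ∃ x : α, ∀ b ∈ B, b < x := by
  obtain ⟨-, hale, hsmall⟩ := hcard
  by_contra h
  push_neg at h
  have hcover : (Set.univ : Set α) ⊆ ⋃ b : B, Iic (b : α) := by
    intro x _
    obtain ⟨b, hbB, hbx⟩ := h x
    exact mem_iUnion.mpr ⟨⟨b, hbB⟩, hbx⟩
  have h1 : #α ≤ #(⋃ b : B, Iic (b : α)) := by
    calc #α = #(Set.univ : Set α) := Cardinal.mk_univ.symm
      _ ≤ _ := Cardinal.mk_le_mk_of_subset hcover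
  have h3 : ∀ b : B, #(Iic (b : α)) < #α := by
    intro b
    have hsub : Iic (b : α) ⊆ insert (b : α) (Iio (b : α)) := by
      intro x hx
      rcases eq_or_lt_of_le (hx : x ≤ (b : α)) with h' | h'
      · exact Or.inl h'
      · exact Or.inr h'
    have : #(Iic (b : α)) ≤ #(Iio (b : α)) + 1 :=
      le_trans (Cardinal.mk_le_mk_of_subset hsub) (Cardinal.mk_insert_le)
    exact lt_of_le_of_lt this
      (Cardinal.add_lt_of_lt hale (hsmall b) (lt_of_lt_of_le one_lt_aleph0 hale))
  have h2 : #(⋃ b : B, Iic (b : α)) ≤ #B * ⨆ b : B, #(Iic (b : α)) :=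
    Cardinal.mk_iUnion_le _
  have h4 : #B * (⨆ b : B, #(Iic (b : α))) < #α :=
    Cardinal.mul_lt_of_lt hale hB (Cardinal.iSup_lt_of_isRegular hreg hB h3)
  exact absurd (h1.trans h2) (not_le.mpr h4)

/-- Any countable sequence has a strict upper bound. -/
lemma aux_ub_seq (hcard : IsCardType α) (hreg : (#α).IsRegular) (hunc : ℵ₀ < #α)
    (g : ℕ → α) : ∃ x : α, ∀ n, g n < x := by
  have hr : #(Set.range g) < #α :=
    lt_of_le_of_lt (Cardinal.mk_le_aleph0_iff.mpr (Set.countable_range g).to_subtype) hunc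
  obtain ⟨x, hx⟩ := aux_ub hcard hreg _ hr
  exact ⟨x, fun n => hx _ (Set.mem_range_self n)⟩

/-- Least strict upper bound of a countable sequence. -/
lemma aux_lub (hcard : IsCardType α) (hreg : (#α).IsRegular) (hunc : ℵ₀ < #α)
    (g : ℕ → α) : ∃ s : α, (∀ n, g n < s) ∧ ∀ b, b < s → ∃ n, b ≤ g n := by
  have hwf : WellFounded ((· < ·) : α → α → Prop) := hcard.1.toIsWellFounded.wf
  obtain ⟨x, hx⟩ := aux_ub_seq hcard hreg hunc g
  set U := {x : α | ∀ n, g n < x} with hU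
  have hUne : U.Nonempty := ⟨x, hx⟩
  refine ⟨hwf.min U hUne, hwf.min_mem U hUne, ?_⟩
  intro b hb
  by_contra hcon
  push_neg at hcon
  exact hwf.not_lt_min U (fun n => lt_of_not_ge (by exact fun h => absurd ((hcon n).trans_le h) (lt_irrefl _)) ) hb

/-- Final segments are clubs. -/
lemma aux_club_Ioi (hcard : IsCardType α) (hreg : (#α).IsRegular)
    (m : α) : IsClubIn (Ioi m) := by
  constructor
  · rintro a ⟨⟨b0, hb0⟩, h⟩
    obtain ⟨c, hc, _, hca⟩ := h b0 hb0
    exact lt_trans hc hca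
  · intro a
    have hfin : #({a, m} : Set α) < #α :=
      lt_of_lt_of_le (lt_of_lt_of_le (Set.toFinite _).lt_aleph0 le_rfl) hcard.2.1
    obtain ⟨x, hx⟩ := aux_ub hcard hreg {a, m} hfin
    exact ⟨x, hx m (by simp), hx a (by simp)⟩

/-- The set of cofinality-ω points is stationary. -/
lemma aux_omegaCof_stat (hcard : IsCardType α) (hreg : (#α).IsRegular) (hunc : ℵ₀ < #α) :
    IsStatIn (omegaCof α) := by
  haveI : Infinite α := Cardinal.aleph0_le_mk_iff.mp hcard.2.1
  intro C hC
  choose next hnextC hnextLt using hC.2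
  obtain ⟨a0⟩ : Nonempty α := inferInstance
  set g : ℕ → α := fun n => next^[n + 1] a0 with hg
  have hgC : ∀ n, g n ∈ C := by
    intro n
    simp only [hg, Function.iterate_succ_apply']
    exact hnextC _
  have hmono : StrictMono g := by
    apply strictMono_nat_of_lt_succ
    intro n
    have : g (n + 1) = next (g n) := by
      simp only [hg, Function.iterate_succ_apply']
    rw [this]
    exact hnextLt _
  obtain ⟨s, hs1, hs2⟩ := aux_lub hcard hreg hunc g
  have hsC : s ∈ C := by
    apply hC.1
    refine ⟨⟨g 0, hs1 0⟩, ?_⟩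
    intro b hb
    obtain ⟨n, hn⟩ := hs2 b hb
    exact ⟨g (n + 1), hgC (n + 1), lt_of_le_of_lt hn (hmono (Nat.lt_succ_self n)), hs1 (n + 1)⟩
  refine ⟨s, ⟨g, hs1, ?_⟩, hsC⟩
  intro x hx
  obtain ⟨n, hn⟩ := hs2 x hx
  exact ⟨n + 1, lt_of_le_of_lt hn (hmono (Nat.lt_succ_self n))⟩

/-- Supersets of stationary sets are stationary. -/
lemma aux_stat_mono {S T : Set α} (hST : S ⊆ T) (hS : IsStatIn S) : IsStatIn T := by
  intro C hC
  obtain ⟨x, hx1, hx2⟩ := hS C hC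
  exact ⟨x, hST hx1, hx2⟩

/-- `omegaCof α` has full cardinality. -/
lemma aux_omegaCof_mk (hcard : IsCardType α) (hreg : (#α).IsRegular) (hunc : ℵ₀ < #α) :
    #(omegaCof α) = #α := by
  refine le_antisymm (Cardinal.mk_set_le _) ?_
  by_contra h
  push_neg at h
  obtain ⟨x, hx⟩ := aux_ub hcard hreg _ h
  obtain ⟨s, hs1, hs2⟩ := aux_omegaCof_stat hcard hreg hunc (Ioi x) (aux_club_Ioi hcard hreg x)
  exact absurd hs2 (not_lt.mpr (le_of_lt (hx s hs1)))

/-- `{omegaCof α}` is a normal filter. -/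
lemma aux_F_normal (hcard : IsCardType α) (hreg : (#α).IsRegular) (hunc : ℵ₀ < #α) :
    IsNormalFilterOn ({omegaCof α} : Set (Set α)) := by
  constructor
  · intro n A hA
    rcases n with _ | n
    · rw [iInter_of_empty A, Cardinal.mk_univ]
    · have : ⋂ i, A i = omegaCof α := by
        apply subset_antisymm
        · intro x hx
          have := mem_iInter.mp hx 0
          rwa [mem_singleton_iff.mp (hA 0)] at this
        · intro x hx
          exact mem_iInter.mpr fun i => by rw [mem_singleton_iff.mp (hA i)]; exact hx
      rw [this]
      exact aux_omegaCof_mk hcard hreg hunc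
  · intro Y hY
    have hsub : omegaCof α ⊆ diagInter Y := by
      intro b hb a _
      rw [mem_singleton_iff.mp (hY a)]
      exact hb
    exact aux_stat_mono hsub (aux_omegaCof_stat hcard hreg hunc)

end Aux

/-- **Proposition 2.10** (Holy–Schlicht). The normal filter extension property fails at
every regular uncountable cardinal `κ`: it is not the case that every normal filter on `κ`
of size at most `κ` can be extended to a normal filter measuring any prescribed `κ`-sized
family of subsets of `κ`.  (The proof starts from the normal filter `{S^κ_ω}` and a
suitable `κ`-model `M`; any normal extension measuring `P(κ) ∩ M` induces a well-founded
ultrapower of `M` in which `κ`, represented by the identity, has cofinality `ω`,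
contradicting inaccessibility of `κ` in `M`.) -/
theorem normal_filter_extension_fails {α : Type u} [LinearOrder α]
    (hcard : IsCardType α) (hreg : (#α).IsRegular) (hunc : ℵ₀ < #α) :
    ¬ (∀ F : Set (Set α), IsNormalFilterOn F → #F ≤ #α →
        ∀ X : Set (Set α), #X ≤ #α →
          ∃ G : Set (Set α), F ⊆ G ∧ IsNormalFilterOn G ∧
            ∀ A ∈ X, A ∈ G ∨ Aᶜ ∈ G) := by
  intro H
  classical
  haveI : Infinite α := Cardinal.aleph0_le_mk_iff.mp hcard.2.1
  set S := omegaCof α with hSdef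
  -- ladders
  have hladder : ∀ b ∈ S, ∃ c : ℕ → α, (∀ n, c n < b) ∧ ∀ x, x < b → ∃ n, x < c n :=
    fun b hb => hb
  choose! lad hlt hcof using hladder
  -- the measured sets
  set A' : ℕ → α → Set α := fun n a => {b | b ∈ S ∧ lad b n = a} ∪ Sᶜ with hA'def
  set X : Set (Set α) := Set.range (fun p : ℕ × α => A' p.1 p.2) with hXdef
  have hXcard : #X ≤ #α := by
    refine le_trans Cardinal.mk_range_le ?_
    have : #(ℕ × α) = ℵ₀ * #α := by simp [Cardinal.mk_prod]
    rw [this, Cardinal.mul_eq_right hcard.2.1 hunc.le aleph0_ne_zero]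
  have hFcard : #({S} : Set (Set α)) ≤ #α := by
    rw [Cardinal.mk_singleton]
    exact le_trans one_lt_aleph0.le hcard.2.1
  obtain ⟨G, hFG, ⟨hGfilt, hGnorm⟩, hGmeas⟩ :=
    H {S} (aux_F_normal hcard hreg hunc) hFcard X hXcard
  have hSG : S ∈ G := hFG rfl
  -- pressing down: each coordinate of the ladder is "constant" on a G-set
  have key : ∀ n : ℕ, ∃ a : α, A' n a ∈ G := by
    intro n
    by_contra h
    push_neg at h
    have hcomp : ∀ a, (A' n a)ᶜ ∈ G := fun a =>
      (hGmeas (A' n a) ⟨(n, a), rfl⟩).resolve_left (h a)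
    have hstat := hGnorm (fun a => (A' n a)ᶜ) hcomp
    -- the set of non-minimal elements is a club
    have hclub : IsClubIn {x : α | ∃ y, y < x} := by
      constructor
      · rintro a ⟨⟨b0, hb0⟩, -⟩
        exact ⟨b0, hb0⟩
      · intro a
        obtain ⟨x, hx⟩ := aux_ub hcard hreg {a}
          (lt_of_lt_of_le (Set.toFinite _).lt_aleph0 hcard.2.1)
        exact ⟨x, ⟨a, hx a rfl⟩, hx a rfl⟩
    obtain ⟨b, hbD, y, hy⟩ := hstat _ hclub
    have hbS : b ∈ S := by
      have := hbD y hy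
      have h2 : b ∉ A' n y := this
      by_contra hbSc
      exact h2 (Or.inr hbSc)
    have hlad : lad b n < b := hlt b hbS n
    exact (hbD (lad b n) hlad) (Or.inl ⟨hbS, rfl⟩)
  choose aseq haseq using key
  -- a strictly increasing ω-sequence to index countably many sets
  have hnomax : ∀ a : α, ∃ b, a < b := fun a => by
    obtain ⟨x, hx⟩ := aux_ub hcard hreg {a}
      (lt_of_lt_of_le (Set.toFinite _).lt_aleph0 hcard.2.1)
    exact ⟨x, hx a rfl⟩
  choose nxt hnxt using hnomax
  obtain ⟨a0⟩ : Nonempty α := inferInstance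
  set e : ℕ → α := fun n => nxt^[n] a0 with he
  have hemono : StrictMono e := by
    apply strictMono_nat_of_lt_succ
    intro n
    have : e (n + 1) = nxt (e n) := by simp only [he, Function.iterate_succ_apply']
    rw [this]; exact hnxt _
  -- bound above all aseq n and e n
  obtain ⟨bstar, hbstar⟩ := aux_ub_seq hcard hreg hunc (fun n => max (aseq n) (e n))
  have hbstar_a : ∀ n, aseq n < bstar := fun n => lt_of_le_of_lt (le_max_left _ _) (hbstar n)
  have hbstar_e : ∀ n, e n < bstar := fun n => lt_of_le_of_lt (le_max_right _ _) (hbstar n)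
  -- the countable family
  set D : ℕ → Set α := fun n => Nat.rec S (fun m _ => A' m (aseq m)) n with hDdef
  have hD : ∀ n, D n ∈ G := by
    intro n
    cases n with
    | zero => exact hSG
    | succ m => exact haseq m
  set k : α → ℕ := fun a => if h : ∃ n, e n = a then h.choose else 0 with hk
  have hke : ∀ n, k (e n) = n := by
    intro n
    have h : ∃ m, e m = e n := ⟨n, rfl⟩
    simp only [hk, dif_pos h]
    exact hemono.injective h.choose_spec
  have hstat := hGnorm (fun a => D (k a)) (fun a => hD (k a))
  obtain ⟨b, hbD, hbI⟩ := hstat (Ioi bstar) (aux_club_Ioi hcard hreg bstar)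
  have hDb : ∀ n, b ∈ D n := by
    intro n
    have h1 : e n < b := lt_trans (hbstar_e n) hbI
    have h2 : b ∈ D (k (e n)) := hbD (e n) h1
    rwa [hke n] at h2
  have hbS : b ∈ S := hDb 0
  have hblad : ∀ n, lad b n = aseq n := by
    intro n
    have := hDb (n + 1)
    rcases this with h | h
    · exact h.2
    · exact absurd hbS h
  obtain ⟨n, hn⟩ := hcof b hbS bstar hbI
  rw [hblad n] at hn
  exact absurd hn (not_lt.mpr (hbstar_a n).le)
end

section
/- Let κ be an uncountable cardinal. In the two-player game of length ω where players I and II alternately play a ⊆-decreasing sequence of subsets of κ each of cardinality κ (Player I moving first), with Player II winning iff the intersection of all played sets has cardinality κ, Player I has a winning strategy: at each of his turns he plays the set obtained from Player II's last set by deleting the least element of each ω-block of its increasing enumeration. -/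
universe u

open Cardinal Set

/-- The moves `f 0, …, f (n-1)` form a legal position in the Schreier game on `κ`:
a ⊆-decreasing sequence of subsets of `κ`, each of cardinality `κ`. -/
def LegalMove {α : Type u} (f : ℕ → Set α) (n : ℕ) : Prop :=
  #(f n) = #α ∧ ∀ m < n, f n ⊆ f m

section SchreierAux

variable {α : Type u} [LinearOrder α] [WellFoundedLT α]

/-- The rank (index in the increasing enumeration) of an element of a subset `A` of the
well-ordered type `α`. -/
noncomputable def srnk (A : Set α) (a : ↥A) : Ordinal.{u} :=
  Ordinal.typein ((· < ·) : ↥A → ↥A → Prop) a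

/-- The result of deleting from `A` the least element of each `ω`-block of its increasing
enumeration: we keep exactly the elements whose rank is not a multiple of `ω`. -/
def schb (A : Set α) : Set α :=
  {a : α | ∃ h : a ∈ A, ¬ (Ordinal.omega0 ∣ srnk A ⟨a, h⟩)}

lemma schb_subset (A : Set α) : schb A ⊆ A := fun _ h => h.1

lemma typein_le_of_relEmbedding {β γ : Type u} {r : β → β → Prop} {s : γ → γ → Prop}
    [IsWellOrder β r] [IsWellOrder γ s] (f : r ↪r s) (b : β) :
    Ordinal.typein r b ≤ Ordinal.typein s (f b) := by
  rw [← Ordinal.type_subrel, ← Ordinal.type_subrel]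
  exact RelEmbedding.ordinal_type_le
    ⟨⟨fun x => ⟨f x.1, f.map_rel_iff.2 x.2⟩,
      fun x y h => Subtype.ext (f.injective (Subtype.mk_eq_mk.1 h))⟩,
      f.map_rel_iff⟩

lemma srnk_mono {A B : Set α} (h : B ⊆ A) (a : α) (ha : a ∈ B) :
    srnk B ⟨a, ha⟩ ≤ srnk A ⟨a, h ha⟩ :=
  typein_le_of_relEmbedding
    (⟨⟨Set.inclusion h, Set.inclusion_injective h⟩, Iff.rfl⟩ :
      ((· < ·) : ↥B → ↥B → Prop) ↪r ((· < ·) : ↥A → ↥A → Prop)) ⟨a, ha⟩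

lemma succ_of_not_omega0_dvd {o : Ordinal} (h : ¬ Ordinal.omega0 ∣ o) :
    Order.succ (Ordinal.pred o) = o := by
  rcases Ordinal.zero_or_succ_or_isSuccLimit o with h0 | ⟨b, rfl⟩ | hl
  · exact absurd (h0 ▸ dvd_zero _) h
  · rw [Ordinal.pred_succ]
  · exact absurd (Ordinal.isSuccLimit_iff_omega0_dvd.1 hl).2 h

lemma not_omega0_dvd_succ (o : Ordinal) : ¬ Ordinal.omega0 ∣ Order.succ o := fun h =>
  Order.not_isSuccLimit_succ o (Ordinal.isSuccLimit_iff_omega0_dvd.2 ⟨(Order.succ_ne_bot o), h⟩)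

lemma srnk_mem_schb {A : Set α} (x : ↥(schb A)) :
    ¬ Ordinal.omega0 ∣ srnk A (Set.inclusion (schb_subset A) x) := by
  obtain ⟨h, hd⟩ := x.2
  exact hd

/-- Key descent lemma: the rank of a surviving element strictly drops after a Schreier move. -/
lemma srnk_schb_lt {A : Set α} {a : α} (ha : a ∈ schb A) :
    srnk (schb A) ⟨a, ha⟩ < srnk A ⟨a, schb_subset A ha⟩ := by
  set inc : ↥(schb A) → ↥A := Set.inclusion (schb_subset A) with hinc
  set pm : ↥(schb A) → Ordinal := fun x => Ordinal.pred (srnk A (inc x)) with hpm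
  have hsucc : ∀ x : ↥(schb A), Order.succ (pm x) = srnk A (inc x) := fun x =>
    succ_of_not_omega0_dvd (srnk_mem_schb x)
  have hmono : StrictMono pm := by
    intro x y hxy
    have h1 : srnk A (inc x) < srnk A (inc y) :=
      (Ordinal.typein_lt_typein _).2 (show (inc x : ↥A) < inc y from hxy)
    rw [← hsucc x, ← hsucc y] at h1
    exact Order.succ_lt_succ_iff.1 h1
  have hlt : ∀ x : ↥(schb A), pm x < Ordinal.type ((· < ·) : ↥A → ↥A → Prop) := fun x =>
    lt_of_le_of_lt (Ordinal.pred_le_self _) (Ordinal.typein_lt_type _ _)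
  set E : ↥(schb A) → ↥A := fun x => Ordinal.enum _ ⟨pm x, hlt x⟩ with hE
  have hEmono : StrictMono E := by
    intro x y hxy
    exact Ordinal.enum_lt_enum.2
      (show (⟨pm x, hlt x⟩ : {o // o < _}) < ⟨pm y, hlt y⟩ from hmono hxy)
  have hEsrnk : ∀ x, srnk A (E x) = pm x := fun x => Ordinal.typein_enum _ _
  have h1 : srnk (schb A) ⟨a, ha⟩ ≤ srnk A (E ⟨a, ha⟩) :=
    typein_le_of_relEmbedding (OrderEmbedding.ofStrictMono E hEmono).ltEmbedding ⟨a, ha⟩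
  calc srnk (schb A) ⟨a, ha⟩ ≤ pm ⟨a, ha⟩ := h1.trans_eq (hEsrnk _)
    _ < Order.succ (pm ⟨a, ha⟩) := Order.lt_succ _
    _ = srnk A ⟨a, schb_subset A ha⟩ := hsucc _

lemma type_subset_eq (hsmall : ∀ a : α, #(Iio a) < #α) {A : Set α} (hA : #A = #α) :
    Ordinal.type ((· < ·) : ↥A → ↥A → Prop) = (#α).ord := by
  have hcardA : Ordinal.card (Ordinal.type ((· < ·) : ↥A → ↥A → Prop)) = #α := by
    rw [Ordinal.card_type]; exact hA
  have h1 : (#α).ord ≤ Ordinal.type ((· < ·) : ↥A → ↥A → Prop) :=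
    Cardinal.ord_le.2 hcardA.ge
  have h2 : Ordinal.type ((· < ·) : ↥A → ↥A → Prop) ≤ Ordinal.type ((· < ·) : α → α → Prop) :=
    RelEmbedding.ordinal_type_le ⟨⟨Subtype.val, Subtype.val_injective⟩, Iff.rfl⟩
  have h3 : Ordinal.type ((· < ·) : α → α → Prop) ≤ (#α).ord := by
    by_contra hlt
    push_neg at hlt
    obtain ⟨a, hae⟩ := Ordinal.typein_surj ((· < ·) : α → α → Prop) hlt
    have hIa : #(Iio a) = (Ordinal.typein ((· < ·) : α → α → Prop) a).card := by
      exact Ordinal.card_typein (r := ((· < ·) : α → α → Prop)) a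
    rw [hae, Cardinal.card_ord] at hIa
    exact absurd hIa (hsmall a).ne
  exact le_antisymm (h2.trans h3) h1

lemma mk_schb (hsmall : ∀ a : α, #(Iio a) < #α) (hal : ℵ₀ ≤ #α) {A : Set α}
    (hA : #A = #α) : #(schb A) = #α := by
  have htype := type_subset_eq hsmall hA
  have hlim : Order.IsSuccLimit ((#α).ord) := Cardinal.isSuccLimit_ord hal
  have hstep : ∀ x : ↥A, Order.succ (srnk A x) < Ordinal.type ((· < ·) : ↥A → ↥A → Prop) := by
    intro x
    rw [htype]
    exact hlim.succ_lt (htype ▸ Ordinal.typein_lt_type _ x)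
  set F : ↥A → ↥A := fun x => Ordinal.enum _ ⟨Order.succ (srnk A x), hstep x⟩ with hF
  have hFr : ∀ x, srnk A (F x) = Order.succ (srnk A x) := fun x => Ordinal.typein_enum _ _
  have hmem : ∀ x : ↥A, (F x : α) ∈ schb A := by
    intro x
    refine ⟨(F x).2, ?_⟩
    have : (⟨(F x : α), (F x).2⟩ : ↥A) = F x := Subtype.ext rfl
    rw [this, hFr]
    exact not_omega0_dvd_succ _
  have hinj : Function.Injective (fun x : ↥A => (⟨(F x : α), hmem x⟩ : ↥(schb A))) := by
    intro x y h
    simp only [Subtype.mk.injEq] at h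
    have : F x = F y := Subtype.ext h
    have h2 : srnk A (F x) = srnk A (F y) := congrArg _ this
    rw [hFr, hFr] at h2
    exact Ordinal.typein_injective _ (Order.succ_injective h2)
  have hle : #α ≤ #(schb A) := by
    calc #α = #A := hA.symm
      _ ≤ #(schb A) := Cardinal.mk_le_of_injective hinj
  exact le_antisymm (hA ▸ Cardinal.mk_le_mk_of_subset (schb_subset A)) hle

end SchreierAux

/-- **Proposition 2.12** (Schreier; see Holy–Schlicht). Let `κ` be an uncountable cardinal.
In the game of length `ω` in which players I and II alternately play a ⊆-decreasing
sequence of subsets of `κ` of cardinality `κ` (player I playing the moves of even index),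
player II winning iff the intersection of all moves has cardinality `κ`, player I has a
winning strategy: a strategy that always produces legal moves against legal play, and such
that in any run in which player I follows it and all moves are legal, the intersection of
the played sets does not have cardinality `κ`. -/
theorem schreier_player_one_wins {α : Type u} [LinearOrder α]
    (hcard : IsCardType α) (hunc : ℵ₀ < #α) :
    ∃ σ : ∀ n : ℕ, (Fin n → Set α) → Set α,
      (∀ (f : ℕ → Set α) (n : ℕ), (∀ m < 2 * n, LegalMove f m) →
        (#(σ (2 * n) (fun i => f i)) = #α ∧
          ∀ m < 2 * n, σ (2 * n) (fun i => f i) ⊆ f m)) ∧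
      (∀ f : ℕ → Set α, (∀ n, f (2 * n) = σ (2 * n) (fun i : Fin (2 * n) => f i)) →
        (∀ n, LegalMove f n) → #(⋂ n, f n) ≠ #α) := by
  obtain ⟨hwo, hal, hsmall⟩ := hcard
  haveI : WellFoundedLT α := hwo.toIsWellFounded
  refine ⟨fun n g => if h : 0 < n then schb (g ⟨n - 1, Nat.sub_lt h Nat.one_pos⟩)
    else Set.univ, ?_, ?_⟩
  · intro f n hleg
    cases n with
    | zero =>
      constructor
      · show #(Set.univ : Set α) = #α
        exact Cardinal.mk_univ
      · intro m hm
        exact absurd hm (Nat.not_lt_zero m)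
    | succ k =>
      have hpos : 0 < 2 * (k + 1) := by omega
      have hidx : 2 * (k + 1) - 1 = 2 * k + 1 := by omega
      have hlegp := hleg (2 * k + 1) (by omega)
      constructor
      · show #(schb (f (2 * (k + 1) - 1))) = #α
        rw [hidx]
        exact mk_schb hsmall hal hlegp.1
      · intro m hm
        show schb (f (2 * (k + 1) - 1)) ⊆ f m
        rw [hidx]
        intro x hx
        have hx' := schb_subset _ hx
        rcases Nat.lt_or_ge m (2 * k + 1) with h | h
        · exact hlegp.2 m h hx'
        · have hme : m = 2 * k + 1 := by omega
          rw [hme]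
          exact hx'
  · intro f hstrat hleg hcontr
    have h0 : #(⋂ n, f n) ≠ 0 := by
      rw [hcontr]
      exact (Cardinal.aleph0_pos.trans_le hal).ne'
    obtain ⟨a, hamem⟩ := Cardinal.mk_ne_zero_iff.1 h0
    have ha' : ∀ k, a ∈ f k := fun k => Set.mem_iInter.1 hamem k
    have key : ∀ n, f (2 * n + 2) = schb (f (2 * n + 1)) := by
      intro n
      have hpos : 0 < 2 * (n + 1) := by omega
      calc f (2 * n + 2) = f (2 * (n + 1)) := by rw [show 2 * n + 2 = 2 * (n + 1) from by omega]
        _ = schb (f (2 * (n + 1) - 1)) := by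
            rw [hstrat (n + 1)]
            show dite (0 < 2 * (n + 1)) (fun h => schb (f (2 * (n + 1) - 1)))
              (fun _ => Set.univ) = schb (f (2 * (n + 1) - 1))
            exact dif_pos hpos
        _ = schb (f (2 * n + 1)) := by rw [show 2 * (n + 1) - 1 = 2 * n + 1 from by omega]
    have hdec : ∀ n : ℕ, srnk (f (2 * n + 3)) ⟨a, ha' _⟩ < srnk (f (2 * n + 1)) ⟨a, ha' _⟩ := by
      intro n
      have hsub : f (2 * n + 3) ⊆ f (2 * n + 2) := (hleg (2 * n + 3)).2 (2 * n + 2) (by omega)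
      have e : f (2 * n + 2) = schb (f (2 * n + 1)) := key n
      have hmem2 : a ∈ f (2 * n + 2) := ha' _
      have hmem2' : a ∈ schb (f (2 * n + 1)) := e ▸ hmem2
      have h1 : srnk (f (2 * n + 3)) ⟨a, ha' _⟩ ≤ srnk (f (2 * n + 2)) ⟨a, hsub (ha' _)⟩ :=
        srnk_mono hsub a _
      have h2 : srnk (f (2 * n + 2)) ⟨a, hmem2⟩
          < srnk (f (2 * n + 1)) ⟨a, schb_subset _ hmem2'⟩ := by
        revert hmem2
        rw [e]
        intro hm
        exact srnk_schb_lt hm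
      exact lt_of_le_of_lt h1 h2
    have hdec' : ∀ n : ℕ, srnk (f (2 * (n + 1) + 1)) ⟨a, ha' _⟩
        < srnk (f (2 * n + 1)) ⟨a, ha' _⟩ := by
      intro n
      exact hdec n
    exact (RelEmbedding.natGT (fun n => srnk (f (2 * n + 1)) ⟨a, ha' _⟩)
      hdec').not_wellFounded Ordinal.lt_wf
end

section
/- Let M be a transitive model of ZFC minus powerset, and let j : M → N be an elementary embedding with critical point κ such that κ+1 ⊆ M ⊆ N and N is transitive. If X ∈ M and M ⊨ |X| = κ, then the restriction j↾X is an element of N. -/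
universe u

open FirstOrder FirstOrder.Language ZFSet

/-- The relations of the language of set theory: a single binary relation `mem`. -/
inductive memRelType : ℕ → Type
  | mem : memRelType 2

/-- The first-order language of set theory, with a single binary relation `∈`. -/
def memLang : FirstOrder.Language :=
  ⟨fun _ => Empty, memRelType⟩

/-- Any collection of ZFC sets is an `∈`-structure, via true membership. -/
instance zStruct (S : Set ZFSet.{u}) : memLang.Structure ↥S where
  funMap := fun f _ => f.elim
  RelMap := fun {n} r x =>
    match n, r, x with
    | _, memRelType.mem, x => (x 0 : ZFSet) ∈ (x 1 : ZFSet)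

/-- The `i`-th (bound) variable as a term. -/
abbrev mvar {n : ℕ} (i : Fin n) : memLang.Term (Empty ⊕ Fin n) :=
  FirstOrder.Language.Term.var (Sum.inr i)

/-- The atomic membership formula `t ∈ u`. -/
def memF {n : ℕ} (t u : memLang.Term (Empty ⊕ Fin n)) : memLang.BoundedFormula Empty n :=
  Relations.boundedFormula₂ memRelType.mem t u

/-- The axiom of extensionality. -/
def extAx : memLang.Sentence :=
  ∀' ∀' ((∀' ((memF (mvar 2) (mvar 0)) ⇔ (memF (mvar 2) (mvar 1)))) ⟹
    ((mvar 0) =' (mvar 1)))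

/-- The empty set axiom. -/
def emptyAx : memLang.Sentence :=
  ∃' ∀' (∼ (memF (mvar 1) (mvar 0)))

/-- The pairing axiom. -/
def pairAx : memLang.Sentence :=
  ∀' ∀' ∃' ((memF (mvar 0) (mvar 2)) ⊓ (memF (mvar 1) (mvar 2)))

/-- The union axiom. -/
def unionAx : memLang.Sentence :=
  ∀' ∃' ∀' ∀' (((memF (mvar 2) (mvar 3)) ⊓ (memF (mvar 3) (mvar 0))) ⟹
    (memF (mvar 2) (mvar 1)))

/-- The axiom of infinity. -/
def infAx : memLang.Sentence :=
  ∃' ((∃' ((memF (mvar 1) (mvar 0)) ⊓ ∀' (∼ (memF (mvar 2) (mvar 1))))) ⊓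
    (∀' ((memF (mvar 1) (mvar 0)) ⟹
      ∃' ((memF (mvar 2) (mvar 0)) ⊓
        ∀' ((memF (mvar 3) (mvar 2)) ⇔
          ((memF (mvar 3) (mvar 1)) ⊔ ((mvar 3) =' (mvar 1))))))))

/-- The foundation axiom. -/
def foundAx : memLang.Sentence :=
  ∀' ((∃' (memF (mvar 1) (mvar 0))) ⟹
    ∃' ((memF (mvar 1) (mvar 0)) ⊓
      ∀' (∼ ((memF (mvar 2) (mvar 0)) ⊓ (memF (mvar 2) (mvar 1))))))

/-- The axiom of choice, in the form: every family of nonempty pairwise disjoint sets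
admits a selector. -/
def choiceAx : memLang.Sentence :=
  ∀' (((∀' ((memF (mvar 1) (mvar 0)) ⟹ ∃' (memF (mvar 2) (mvar 1)))) ⊓
      (∀' ∀' (((memF (mvar 1) (mvar 0)) ⊓ (memF (mvar 2) (mvar 0)) ⊓
          (∼ ((mvar 1) =' (mvar 2)))) ⟹
        ∼ (∃' ((memF (mvar 3) (mvar 1)) ⊓ (memF (mvar 3) (mvar 2))))))) ⟹
    ∃' ∀' ((memF (mvar 2) (mvar 0)) ⟹
      ∃' ((memF (mvar 3) (mvar 2)) ⊓ (memF (mvar 3) (mvar 1)) ⊓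
        ∀' (((memF (mvar 4) (mvar 2)) ⊓ (memF (mvar 4) (mvar 1))) ⟹
          ((mvar 4) =' (mvar 3))))))

/-- The separation axiom for the formula `φ(p₀,…,p_{n-1}, x)`. -/
def sepAx (n : ℕ) (φ : memLang.BoundedFormula Empty (n + 1)) : memLang.Sentence :=
  (∀' (∃' (∀' ((memF (mvar ⟨n + 2, by omega⟩) (mvar ⟨n + 1, by omega⟩)) ⇔
    ((memF (mvar ⟨n + 2, by omega⟩) (mvar ⟨n, by omega⟩)) ⊓
      (φ.liftAt 2 n)))))).alls

/-- The collection axiom for the formula `φ(p₀,…,p_{n-1}, x, y)`. -/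
def collAx (n : ℕ) (φ : memLang.BoundedFormula Empty (n + 2)) : memLang.Sentence :=
  (∀' ((∀' ((memF (mvar ⟨n + 1, by omega⟩) (mvar ⟨n, by omega⟩)) ⟹
        ∃' (φ.liftAt 1 n))) ⟹
      (∃' (∀' ((memF (mvar ⟨n + 2, by omega⟩) (mvar ⟨n, by omega⟩)) ⟹
        ∃' ((memF (mvar ⟨n + 3, by omega⟩) (mvar ⟨n + 1, by omega⟩)) ⊓
          (φ.liftAt 2 n))))))).alls

/-- The power set axiom. -/
def powAx : memLang.Sentence :=
  ∀' ∃' ∀' ((∀' ((memF (mvar 3) (mvar 2)) ⟹ (memF (mvar 3) (mvar 0)))) ⟹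
    (memF (mvar 2) (mvar 1)))

/-- The theory `ZFC⁻`: ZFC without the power set axiom, with collection. -/
def ZFCminus : memLang.Theory :=
  {extAx, emptyAx, pairAx, unionAx, infAx, foundAx, choiceAx} ∪
    (⋃ n : ℕ, Set.range (sepAx n)) ∪ (⋃ n : ℕ, Set.range (collAx n))

/-- The theory `ZFC`. -/
def ZFCfull : memLang.Theory := insert powAx ZFCminus

/-- `S` is an elementary substructure of `T` with respect to the membership relation. -/
def ElemSub (S T : Set ZFSet.{u}) : Prop :=
  ∃ h : S ⊆ T, ∀ (n : ℕ) (φ : memLang.BoundedFormula Empty n) (x : Fin n → ↥S),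
    φ.Realize Empty.elim x ↔
      φ.Realize Empty.elim (fun i => (⟨(x i : ZFSet), h (x i).2⟩ : ↥T))

/-- `j : S → T` is an elementary embedding of `∈`-structures. -/
def ElemEmbOf (S T : Set ZFSet.{u}) (j : ↥S → ↥T) : Prop :=
  ∀ (n : ℕ) (φ : memLang.BoundedFormula Empty n) (x : Fin n → ↥S),
    φ.Realize Empty.elim x ↔ φ.Realize Empty.elim (j ∘ x)
/-- The cardinality of a ZFC set. -/
noncomputable def zcard (x : ZFSet.{u}) : Cardinal.{u + 1} := Cardinal.mk x.toSet

/-- `θ` is (the von Neumann representation of) a regular cardinal. -/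
def IsRegCard (θ : ZFSet.{u}) : Prop :=
  θ.IsOrdinal ∧ (zcard θ).IsRegular ∧ ∀ x ∈ θ, zcard x < zcard θ

/-- `κ` is (the von Neumann representation of) a cardinal. -/
def IsCardZ (κ : ZFSet.{u}) : Prop :=
  κ.IsOrdinal ∧ ∀ x ∈ κ, zcard x < zcard κ

/-- The collection `H(θ)` of sets hereditarily of cardinality less than `θ`. -/
def HZ (θ : ZFSet.{u}) : Set ZFSet.{u} :=
  {x | ZFSet.Hereditarily (fun y => zcard y < zcard θ) x}

/-- The collection `H(κ⁺)` of sets hereditarily of cardinality at most `κ`. -/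
def Hplus (κ : ZFSet.{u}) : Set ZFSet.{u} :=
  {x | ZFSet.Hereditarily (fun y => zcard y ≤ zcard κ) x}

/-- `f` codes a bijection from `a` onto `b`. -/
def IsBijZ (a b f : ZFSet.{u}) : Prop :=
  ZFSet.IsFunc a b f ∧ (∀ x₁ x₂ y, ZFSet.pair x₁ y ∈ f → ZFSet.pair x₂ y ∈ f → x₁ = x₂) ∧
    ∀ y ∈ b, ∃ x, ZFSet.pair x y ∈ f

/-- `f` codes an injection from `a` into `b`. -/
def IsInjZ (a b f : ZFSet.{u}) : Prop :=
  ZFSet.IsFunc a b f ∧ ∀ x₁ x₂ y, ZFSet.pair x₁ y ∈ f → ZFSet.pair x₂ y ∈ f → x₁ = x₂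

-- Part C : models
/-- A weak `κ`-model: a set `M` of size `κ` with `κ + 1 ⊆ M` satisfying `ZFC⁻`. -/
def WeakModelZ (κ : ZFSet.{u}) (M : Set ZFSet.{u}) : Prop :=
  Cardinal.mk ↥M = zcard κ ∧ insert κ κ.toSet ⊆ M ∧ (↥M ⊨ ZFCminus)

/-- `M` is closed under `<α`-sequences (of sets, with domains ordinals `< α`). -/
def LtClosed (α : ZFSet.{u}) (M : Set ZFSet.{u}) : Prop :=
  ∀ δ y f : ZFSet, δ ∈ α → y.toSet ⊆ M → ZFSet.IsFunc δ y f → f ∈ M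

/-- A `κ`-model: a weak `κ`-model closed under `<κ`-sequences. -/
def KappaModelZ (κ : ZFSet.{u}) (M : Set ZFSet.{u}) : Prop :=
  WeakModelZ κ M ∧ LtClosed κ M

/-- `j : S → T` has critical point `κ`. -/
def CritAt (S T : Set ZFSet.{u}) (j : ↥S → ↥T) (κ : ZFSet.{u}) : Prop :=
  ∃ hκ : κ ∈ S, (∀ x : ↥S, (x : ZFSet) ∈ κ → ((j x : ZFSet) = (x : ZFSet))) ∧
    (j ⟨κ, hκ⟩ : ZFSet) ≠ κ

/-- `j : S → T` is `κ`-powerset preserving: it has critical point `κ` and `S` and `T`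
have the same subsets of `κ`. -/
def PPres (κ : ZFSet.{u}) (S T : Set ZFSet.{u}) (j : ↥S → ↥T) : Prop :=
  CritAt S T j κ ∧ ∀ A : ZFSet, A ⊆ κ → (A ∈ S ↔ A ∈ T)

-- Part D : filters
/-- A filter on `κ` (in the sense of Holy–Schlicht): a collection of subsets of `κ` all of
whose finite intersections have cardinality `κ`. -/
def IsZFilter (κ : ZFSet.{u}) (F : Set ZFSet.{u}) : Prop :=
  (∀ A ∈ F, A ⊆ κ) ∧ ∀ (n : ℕ) (A : Fin n → ZFSet),
    (∀ i, A i ∈ F) → Cardinal.mk ↥(κ.toSet ∩ ⋂ i, (A i).toSet) = zcard κ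

/-- The diagonal intersection of a `κ`-sequence of subsets of `κ` coded by the
set-function `m`. -/
noncomputable def diagZ (κ m : ZFSet.{u}) : ZFSet.{u} :=
  ZFSet.sep (fun b => ∀ a v, a ∈ b → ZFSet.pair a v ∈ m → b ∈ v) κ

/-- `m` codes a `κ`-sequence of elements of `F`. -/
def CodesFilterSeq (κ : ZFSet.{u}) (F : Set ZFSet.{u}) (m : ZFSet.{u}) : Prop :=
  (∃ y, ZFSet.IsFunc κ y m) ∧ ∀ b v, b ∈ κ → ZFSet.pair b v ∈ m → v ∈ F

/-- `F` is an `M`-normal filter on `κ`: it measures `P(κ) ∩ M` and is closed under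
diagonal intersections of `κ`-sequences of its elements lying in `M`. -/
def MNormalZ (κ : ZFSet.{u}) (F : Set ZFSet.{u}) (M : Set ZFSet.{u}) : Prop :=
  IsZFilter κ F ∧ (∀ A : ZFSet, A ∈ M → A ⊆ κ → (A ∈ F ∨ (κ \ A) ∈ F)) ∧
    ∀ m ∈ M, CodesFilterSeq κ F m → diagZ κ m ∈ F

/-- `U` is weakly amenable for `M`: traces of `U` on `κ`-sized elements of `M` are in `M`. -/
def WeaklyAmenableZ (κ : ZFSet.{u}) (M : Set ZFSet.{u}) (U : Set ZFSet.{u}) : Prop :=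
  ∀ A : ZFSet, A ∈ M → zcard A ≤ zcard κ →
    ∃ B ∈ M, ∀ z : ZFSet, z ∈ B ↔ (z ∈ A ∧ z ∈ U)

/-- The domain of the ultrapower of `M` by a filter on `κ`: functions with domain `κ`
lying in `M`. -/
def UltFn (κ : ZFSet.{u}) (M : Set ZFSet.{u}) : Set ZFSet.{u} :=
  {f | f ∈ M ∧ ∃ y, ZFSet.IsFunc κ y f}

/-- The membership relation of the ultrapower of `M` by `U`. -/
noncomputable def UltMem (κ : ZFSet.{u}) (U : Set ZFSet.{u}) (f g : ZFSet.{u}) : Prop :=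
  ZFSet.sep (fun a => ∃ v w, ZFSet.pair a v ∈ f ∧ ZFSet.pair a w ∈ g ∧ v ∈ w) κ ∈ U

/-- The ultrapower of `M` by `U` is well-founded. -/
noncomputable def WellFoundedUlt (κ : ZFSet.{u}) (M : Set ZFSet.{u}) (U : Set ZFSet.{u}) : Prop :=
  WellFounded (fun f g : ↥(UltFn κ M) => UltMem κ U (f : ZFSet) (g : ZFSet))
-- Part E : the filter games G_γ^θ(κ)
/-- `m` codes the sequence `⟨g b | b ∈ d⟩` of `κ`-sized collections of sets. -/
def CodesSetSeq (m d : ZFSet.{u}) (g : ZFSet.{u} → Set ZFSet.{u}) : Prop :=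
  (∃ y, ZFSet.IsFunc d y m) ∧ ∀ b v, b ∈ d → ZFSet.pair b v ∈ m → v.toSet = g b

open Classical in
/-- The restriction of a play to the moves of index `< i`. -/
noncomputable def restrLt (g : ZFSet.{u} → Set ZFSet.{u}) (i : ZFSet.{u}) :
    ZFSet.{u} → Set ZFSet.{u} :=
  fun b => if b ∈ i then g b else ∅

open Classical in
/-- The restriction of a play to the moves of index `≤ i`. -/
noncomputable def restrLe (g : ZFSet.{u} → Set ZFSet.{u}) (i : ZFSet.{u}) :
    ZFSet.{u} → Set ZFSet.{u} :=
  fun b => if (b ∈ i ∨ b = i) then g b else ∅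

/-- The challenger's move at stage `i` of `G_γ^θ(κ)` is legal: he plays a `κ`-model
`M_i ≺ H(θ)` containing (codes for) the sequences of previous models and filter traces,
increasing the chain of models. -/
def ChalLegalAt (κ θ : ZFSet.{u}) (Ms Fs : ZFSet.{u} → Set ZFSet.{u}) (i : ZFSet.{u}) : Prop :=
  (∀ j, j ∈ i → Ms j ⊆ Ms i) ∧ KappaModelZ κ (Ms i) ∧ ElemSub (Ms i) (HZ θ) ∧
    (∃ m ∈ Ms i, CodesSetSeq m i Ms) ∧
    (∃ f ∈ Ms i, CodesSetSeq f i (fun b => Fs b ∩ Ms b))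

/-- The judge's move at stage `i` of `G_γ^θ(κ)` is legal: she plays a filter `F_i` on `κ`
measuring `P(κ) ∩ M_i` and extending her previous filters. -/
def JudgeLegalAt (κ : ZFSet.{u}) (Ms Fs : ZFSet.{u} → Set ZFSet.{u}) (i : ZFSet.{u}) : Prop :=
  IsZFilter κ (Fs i) ∧ (∀ A : ZFSet, A ∈ Ms i → A ⊆ κ → (A ∈ Fs i ∨ (κ \ A) ∈ Fs i)) ∧
    ∀ j, j ∈ i → Fs j ⊆ Fs i

/-- The winning condition for the judge in `G_γ^θ(κ)`: the union of the filters played is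
normal for the union of the models played. -/
def JudgeWinsRun (κ γ : ZFSet.{u}) (Ms Fs : ZFSet.{u} → Set ZFSet.{u}) : Prop :=
  MNormalZ κ (⋃ i ∈ γ.toSet, Fs i) (⋃ i ∈ γ.toSet, Ms i)

/-- `σ` is a winning strategy for the challenger in the game `G_γ^θ(κ)`. -/
noncomputable def ChalWS (κ θ γ : ZFSet.{u})
    (σ : ZFSet.{u} → (ZFSet.{u} → Set ZFSet.{u}) → Set ZFSet.{u}) : Prop :=
  ∀ Fs : ZFSet.{u} → Set ZFSet.{u},
    (∀ i ∈ γ.toSet, (∀ j, j ∈ i → JudgeLegalAt κ (fun b => σ b (restrLt Fs b)) Fs j) →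
      ChalLegalAt κ θ (fun b => σ b (restrLt Fs b)) Fs i) ∧
    ((∀ i ∈ γ.toSet, JudgeLegalAt κ (fun b => σ b (restrLt Fs b)) Fs i) →
      ¬ JudgeWinsRun κ γ (fun b => σ b (restrLt Fs b)) Fs)

/-- `τ` is a winning strategy for the judge in the game `G_γ^θ(κ)`. -/
noncomputable def JudgeWS (κ θ γ : ZFSet.{u})
    (τ : ZFSet.{u} → (ZFSet.{u} → Set ZFSet.{u}) → Set ZFSet.{u}) : Prop :=
  ∀ Ms : ZFSet.{u} → Set ZFSet.{u},
    (∀ i ∈ γ.toSet,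
      (∀ j, (j ∈ i ∨ j = i) → ChalLegalAt κ θ Ms (fun b => τ b (restrLe Ms b)) j) →
      JudgeLegalAt κ Ms (fun b => τ b (restrLe Ms b)) i) ∧
    ((∀ i ∈ γ.toSet, ChalLegalAt κ θ Ms (fun b => τ b (restrLe Ms b)) i) →
      JudgeWinsRun κ γ Ms (fun b => τ b (restrLe Ms b)))

/-- `κ` has the `γ`-filter property: for every regular `θ > κ`, the challenger has no
winning strategy in `G_γ^θ(κ)`. -/
noncomputable def FilterPropZ (κ γ : ZFSet.{u}) : Prop :=
  ∀ θ : ZFSet.{u}, IsRegCard θ → κ ∈ θ → ¬ ∃ σ, ChalWS κ θ γ σ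

/-- `κ` has the strategic `γ`-filter property: for every regular `θ > κ`, the judge has a
winning strategy in `G_γ^θ(κ)`. -/
noncomputable def StratFilterPropZ (κ γ : ZFSet.{u}) : Prop :=
  ∀ θ : ZFSet.{u}, IsRegCard θ → κ ∈ θ → ∃ τ, JudgeWS κ θ γ τ

/-- `κ` is `α`-Ramsey (Holy–Schlicht, Definition 5.1): for arbitrarily large regular
cardinals `θ`, every `A ⊆ κ` is contained, as an element, in some weak `κ`-model
`M ≺ H(θ)` closed under `<α`-sequences, for which there exists a `κ`-powerset preserving
elementary embedding `j : M → N`. -/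
def AlphaRamseyZ (α κ : ZFSet.{u}) : Prop :=
  ∀ η : ZFSet.{u}, ∃ θ : ZFSet.{u}, η ∈ θ ∧ IsRegCard θ ∧ ∀ A : ZFSet, A ⊆ κ →
    ∃ M : Set ZFSet.{u}, A ∈ M ∧ WeakModelZ κ M ∧ LtClosed α M ∧ ElemSub M (HZ θ) ∧
      ∃ (N : Set ZFSet.{u}) (j : ↥M → ↥N), ElemEmbOf M N j ∧ PPres κ M N j

/-- `S` is a transitive collection of sets. -/
def IsTransClass (S : Set ZFSet.{u}) : Prop :=
  ∀ x ∈ S, (x : ZFSet).toSet ⊆ S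
namespace AncientKunenAux
variable {T : Set ZFSet.{u}}

theorem realize_memF' {n : ℕ} (t u : Fin n) (xs : Fin n → ↥T) :
    (memF (mvar t) (mvar u)).Realize Empty.elim xs ↔ (xs t : ZFSet) ∈ (xs u : ZFSet) :=
  Iff.rfl

theorem realize_eqF {n : ℕ} (t u : Fin n) (xs : Fin n → ↥T) :
    ((mvar t) =' (mvar u) : memLang.BoundedFormula Empty n).Realize Empty.elim xs ↔
      (xs t : ZFSet) = (xs u : ZFSet) := by
  simp [Subtype.ext_iff]

/-- `y = pair v w` as a Δ₀ formula (with witnesses as members). -/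
def pairFml {n : ℕ} (y v w : Fin n) : memLang.BoundedFormula Empty n :=
  ∃' ∃' (
    (memF (mvar (Fin.last n).castSucc) (mvar y.castSucc.castSucc)) ⊓
    (memF (mvar (Fin.last (n+1))) (mvar y.castSucc.castSucc)) ⊓
    (∀' (memF (mvar (Fin.last (n+2))) (mvar y.castSucc.castSucc.castSucc) ⟹
      ((mvar (Fin.last (n+2)) =' mvar (Fin.last n).castSucc.castSucc) ⊔
       (mvar (Fin.last (n+2)) =' mvar (Fin.last (n+1)).castSucc)))) ⊓
    (memF (mvar v.castSucc.castSucc) (mvar (Fin.last n).castSucc)) ⊓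
    (∀' (memF (mvar (Fin.last (n+2))) (mvar (Fin.last n).castSucc.castSucc) ⟹
      (mvar (Fin.last (n+2)) =' mvar v.castSucc.castSucc.castSucc))) ⊓
    (memF (mvar v.castSucc.castSucc) (mvar (Fin.last (n+1)))) ⊓
    (memF (mvar w.castSucc.castSucc) (mvar (Fin.last (n+1)))) ⊓
    (∀' (memF (mvar (Fin.last (n+2))) (mvar (Fin.last (n+1)).castSucc) ⟹
      ((mvar (Fin.last (n+2)) =' mvar v.castSucc.castSucc.castSucc) ⊔
       (mvar (Fin.last (n+2)) =' mvar w.castSucc.castSucc.castSucc)))))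

theorem realize_pairFml (hT : IsTransClass T) {n : ℕ} (y v w : Fin n) (xs : Fin n → ↥T) :
    (pairFml y v w).Realize Empty.elim xs ↔
      (xs y : ZFSet) = ZFSet.pair (xs v) (xs w) := by
  have habs : ∀ z : ZFSet, z ∈ T → ∀ t, t ∈ z → t ∈ T :=
    fun z hz t ht => hT z hz (Iff.rfl.2 ht)
  simp only [pairFml, BoundedFormula.realize_ex, BoundedFormula.realize_all,
    BoundedFormula.realize_inf, BoundedFormula.realize_imp, BoundedFormula.realize_sup,
    realize_memF', realize_eqF, Fin.snoc_castSucc, Fin.snoc_last]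
  constructor
  · rintro ⟨a, b, ⟨⟨⟨⟨⟨⟨⟨h1, h2⟩, h3⟩, h4⟩, h5⟩, h6⟩, h7⟩, h8⟩⟩
    have ha : (a : ZFSet) = {(xs v : ZFSet)} := by
      apply ZFSet.ext; intro z
      constructor
      · intro hz
        have hzT : z ∈ T := habs a a.2 z hz
        simpa using h5 ⟨z, hzT⟩ hz
      · intro hz; rw [ZFSet.mem_singleton] at hz; subst hz; exact h4
    have hb : (b : ZFSet) = {(xs v : ZFSet), (xs w : ZFSet)} := by
      apply ZFSet.ext; intro z
      constructor
      · intro hz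
        have hzT : z ∈ T := habs b b.2 z hz
        have := h8 ⟨z, hzT⟩ hz
        simp only [ZFSet.mem_insert_iff, ZFSet.mem_singleton]
        exact this
      · intro hz; rcases ZFSet.mem_insert_iff.1 hz with h | h
        · subst h; exact h6
        · rw [ZFSet.mem_singleton] at h; subst h; exact h7
    apply ZFSet.ext; intro z
    rw [ZFSet.pair]
    constructor
    · intro hz
      have hzT : z ∈ T := habs _ (xs y).2 z hz
      simp only [ZFSet.mem_insert_iff, ZFSet.mem_singleton]
      rcases h3 ⟨z, hzT⟩ hz with h | h
      · left; rw [show (z:ZFSet) = a from h, ha]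
      · right; rw [show (z:ZFSet) = b from h, hb]
    · intro hz
      rcases ZFSet.mem_insert_iff.1 hz with h | h
      · subst h; rw [← ha]; exact h1
      · rw [ZFSet.mem_singleton] at h; subst h; rw [← hb]; exact h2
  · intro h
    have h1 : ({(xs v : ZFSet)} : ZFSet) ∈ (xs y : ZFSet) := by
      rw [h, ZFSet.pair]; simp
    have h2 : ({(xs v : ZFSet), (xs w : ZFSet)} : ZFSet) ∈ (xs y : ZFSet) := by
      rw [h, ZFSet.pair]; simp
    refine ⟨⟨_, habs _ (xs y).2 _ h1⟩, ⟨_, habs _ (xs y).2 _ h2⟩,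
      ⟨⟨⟨⟨⟨⟨⟨h1, h2⟩, ?_⟩, ?_⟩, ?_⟩, ?_⟩, ?_⟩, ?_⟩⟩
    · intro c hc
      rw [h, ZFSet.pair, ZFSet.mem_insert_iff, ZFSet.mem_singleton] at hc
      exact hc
    · simp
    · intro c hc; rw [ZFSet.mem_singleton] at hc; exact hc
    · simp
    · simp
    · intro c hc
      rw [ZFSet.mem_insert_iff, ZFSet.mem_singleton] at hc
      exact hc
/-- Semantic content of `collBody`. -/
def SemP (f g a y : ZFSet.{u}) : Prop :=
  ∃ v w : ZFSet.{u}, ZFSet.pair a v ∈ f ∧ ZFSet.pair a w ∈ g ∧ y = ZFSet.pair v w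

/-- `∃ q ∈ f, ∃ q' ∈ g, ∃ v w, q = (a,v) ∧ q' = (a,w) ∧ y = (v,w)`. -/
def collBody {n : ℕ} (f g a y : Fin n) : memLang.BoundedFormula Empty n :=
  ∃' ∃' ∃' ∃' (
    (memF (mvar (Fin.last n).castSucc.castSucc.castSucc)
          (mvar f.castSucc.castSucc.castSucc.castSucc)) ⊓
    (memF (mvar (Fin.last (n+1)).castSucc.castSucc)
          (mvar g.castSucc.castSucc.castSucc.castSucc)) ⊓
    (pairFml (Fin.last n).castSucc.castSucc.castSucc
      a.castSucc.castSucc.castSucc.castSucc ((Fin.last (n+2)).castSucc)) ⊓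
    (pairFml (Fin.last (n+1)).castSucc.castSucc
      a.castSucc.castSucc.castSucc.castSucc (Fin.last (n+3))) ⊓
    (pairFml y.castSucc.castSucc.castSucc.castSucc
      ((Fin.last (n+2)).castSucc) (Fin.last (n+3))))

theorem realize_collBody (hT : IsTransClass T) {n : ℕ} (f g a y : Fin n) (xs : Fin n → ↥T) :
    (collBody f g a y).Realize Empty.elim xs ↔
      SemP (xs f) (xs g) (xs a) (xs y) := by
  have habs : ∀ z : ZFSet, z ∈ T → ∀ t, t ∈ z → t ∈ T :=
    fun z hz t ht => hT z hz (Iff.rfl.2 ht)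
  simp only [collBody, BoundedFormula.realize_ex, BoundedFormula.realize_inf,
    realize_memF', realize_pairFml hT, Fin.snoc_castSucc, Fin.snoc_last]
  constructor
  · rintro ⟨q, q', vv, ww, ⟨⟨⟨⟨hq, hq'⟩, e1⟩, e2⟩, e3⟩⟩
    exact ⟨vv, ww, by rw [← e1]; exact hq, by rw [← e2]; exact hq', e3⟩
  · rintro ⟨v, w, h1, h2, h3⟩
    have hqT : ZFSet.pair (xs a) v ∈ T := habs _ (xs f).2 _ h1
    have hq'T : ZFSet.pair (xs a) w ∈ T := habs _ (xs g).2 _ h2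
    have hvT : v ∈ T := by
      refine habs _ (habs _ hqT ({(xs a : ZFSet), v}) ?_) _ (by simp)
      rw [ZFSet.pair]; simp
    have hwT : w ∈ T := by
      refine habs _ (habs _ hq'T ({(xs a : ZFSet), w}) ?_) _ (by simp)
      rw [ZFSet.pair]; simp
    exact ⟨⟨_, hqT⟩, ⟨_, hq'T⟩, ⟨v, hvT⟩, ⟨w, hwT⟩, ⟨⟨⟨⟨h1, h2⟩, rfl⟩, rfl⟩, h3⟩⟩

/-- `F` (variable 0) is a functional set of Kuratowski pairs (as far as second
coordinates go). -/
def funFml : memLang.BoundedFormula Empty 1 :=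
  ∀' ∀' ∀' ∀' ∀' ((
    (memF (mvar (Fin.last 1).castSucc.castSucc.castSucc.castSucc)
          (mvar ((0 : Fin 1).castSucc.castSucc.castSucc.castSucc.castSucc))) ⊓
    (memF (mvar (Fin.last 2).castSucc.castSucc.castSucc)
          (mvar ((0 : Fin 1).castSucc.castSucc.castSucc.castSucc.castSucc))) ⊓
    (pairFml ((Fin.last 1).castSucc.castSucc.castSucc.castSucc)
      ((Fin.last 3).castSucc.castSucc) ((Fin.last 4).castSucc)) ⊓
    (pairFml ((Fin.last 2).castSucc.castSucc.castSucc)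
      ((Fin.last 3).castSucc.castSucc) (Fin.last 5))) ⟹
    ((mvar ((Fin.last 4).castSucc)) =' (mvar (Fin.last 5))))

theorem realize_funFml (hT : IsTransClass T) (g : ↥T) :
    funFml.Realize Empty.elim (fun _ => g) ↔
      ∀ a v w : ZFSet, ZFSet.pair a v ∈ (g : ZFSet) → ZFSet.pair a w ∈ (g : ZFSet) → v = w := by
  have habs : ∀ z : ZFSet, z ∈ T → ∀ t, t ∈ z → t ∈ T :=
    fun z hz t ht => hT z hz (Iff.rfl.2 ht)
  simp only [funFml, BoundedFormula.realize_all, BoundedFormula.realize_imp,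
    BoundedFormula.realize_inf, realize_memF', realize_eqF, realize_pairFml hT,
    Fin.snoc_castSucc, Fin.snoc_last]
  constructor
  · intro H a v w h1 h2
    have hqT : ZFSet.pair a v ∈ T := habs _ g.2 _ h1
    have hq'T : ZFSet.pair a w ∈ T := habs _ g.2 _ h2
    have haT : a ∈ T := by
      refine habs _ (habs _ hqT ({a} : ZFSet) ?_) _ (by simp)
      rw [ZFSet.pair]; simp
    have hvT : v ∈ T := by
      refine habs _ (habs _ hqT ({a, v} : ZFSet) ?_) _ (by simp)
      rw [ZFSet.pair]; simp
    have hwT : w ∈ T := by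
      refine habs _ (habs _ hq'T ({a, w} : ZFSet) ?_) _ (by simp)
      rw [ZFSet.pair]; simp
    exact H ⟨_, hqT⟩ ⟨_, hq'T⟩ ⟨a, haT⟩ ⟨v, hvT⟩ ⟨w, hwT⟩ ⟨⟨⟨h1, h2⟩, rfl⟩, rfl⟩
  · rintro H q q' a v w ⟨⟨⟨h1, h2⟩, e1⟩, e2⟩
    exact H a v w (by rw [← e1]; exact h1) (by rw [← e2]; exact h2)
theorem sentence_realize_iff (φ : memLang.Sentence) :
    (↥T ⊨ φ) ↔ Formula.Realize φ (Empty.elim : Empty → ↥T) := by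
  rw [Sentence.Realize,
    show (default : Empty → ↥T) = Empty.elim from Subsingleton.elim _ _]

theorem realize_mem_ZFCminus (hM : ↥T ⊨ ZFCminus) {φ : memLang.Sentence}
    (hφ : φ ∈ ZFCminus) : Formula.Realize φ (Empty.elim : Empty → ↥T) :=
  (sentence_realize_iff φ).1 (hM.realize_of_mem φ hφ)

theorem formula_realize_iff_bf (φ : memLang.Sentence) :
    Formula.Realize φ (Empty.elim : Empty → ↥T) ↔
      BoundedFormula.Realize φ Empty.elim (default : Fin 0 → ↥T) :=
  Iff.rfl

/-- Transfer of the theory along an elementary embedding. -/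
theorem models_of_elemEmb {S T : Set ZFSet.{u}} (j : ↥S → ↥T) (hj : ElemEmbOf S T j)
    (hS : ↥S ⊨ ZFCminus) : ↥T ⊨ ZFCminus := by
  refine ⟨fun φ hφ => ?_⟩
  rw [sentence_realize_iff, formula_realize_iff_bf]
  have := (hj 0 φ (default : Fin 0 → ↥S)).1 ((realize_mem_ZFCminus hS hφ))
  rwa [show j ∘ (default : Fin 0 → ↥S) = (default : Fin 0 → ↥T) from Subsingleton.elim _ _] at this
theorem realize_pairAx (hM : ↥T ⊨ ZFCminus) (x y : ↥T) :
    ∃ z : ↥T, (x : ZFSet) ∈ (z : ZFSet) ∧ (y : ZFSet) ∈ (z : ZFSet) := by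
  have h := realize_mem_ZFCminus hM (show pairAx ∈ ZFCminus by left; left; simp)
  rw [formula_realize_iff_bf] at h
  simp only [pairAx, BoundedFormula.realize_all, BoundedFormula.realize_ex,
    BoundedFormula.realize_inf, realize_memF'] at h
  obtain ⟨z, hz1, hz2⟩ := h x y
  exact ⟨z, hz1, hz2⟩
/-- `t = p₀ ∨ t = p₁`. -/
def phiPair : memLang.BoundedFormula Empty 3 :=
  ((mvar 2) =' (mvar 0)) ⊔ ((mvar 2) =' (mvar 1))

theorem upair_mem (hT : IsTransClass T) (hM : ↥T ⊨ ZFCminus) {x y : ZFSet.{u}}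
    (hx : x ∈ T) (hy : y ∈ T) : ({x, y} : ZFSet) ∈ T := by
  obtain ⟨z, hz1, hz2⟩ := realize_pairAx hM ⟨x, hx⟩ ⟨y, hy⟩
  have h := realize_mem_ZFCminus hM (show sepAx 2 phiPair ∈ ZFCminus by
    left; right; exact Set.mem_iUnion.2 ⟨2, Set.mem_range.2 ⟨phiPair, rfl⟩⟩)
  simp only [sepAx, BoundedFormula.realize_alls, BoundedFormula.realize_all,
    BoundedFormula.realize_ex, BoundedFormula.realize_iff, BoundedFormula.realize_inf,
    realize_memF',
    BoundedFormula.realize_liftAt (show 2 ≤ 3 by norm_num)] at h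
  obtain ⟨d, hd⟩ := h ![⟨x, hx⟩, ⟨y, hy⟩] z
  simp only [phiPair, BoundedFormula.realize_sup, realize_eqF] at hd
  have hd' : ∀ t : ↥T, ((t : ZFSet) ∈ (d : ZFSet)) ↔
      ((t : ZFSet) ∈ (z : ZFSet) ∧ ((t : ZFSet) = x ∨ (t : ZFSet) = y)) := fun t => hd t
  have : ({x, y} : ZFSet) = (d : ZFSet) := by
    apply ZFSet.ext; intro t
    constructor
    · intro ht
      rcases ZFSet.mem_insert_iff.1 ht with h' | h'
      · subst h'; exact (hd' ⟨t, hx⟩).2 ⟨hz1, Or.inl rfl⟩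
      · rw [ZFSet.mem_singleton] at h'; subst h'
        exact (hd' ⟨t, hy⟩).2 ⟨hz2, Or.inr rfl⟩
    · intro ht
      have htT : t ∈ T := hT _ d.2 (Iff.rfl.2 ht)
      rw [ZFSet.mem_insert_iff, ZFSet.mem_singleton]
      exact ((hd' ⟨t, htT⟩).1 ht).2
  rw [this]; exact d.2
theorem kpair_mem (hT : IsTransClass T) (hM : ↥T ⊨ ZFCminus) {x y : ZFSet.{u}}
    (hx : x ∈ T) (hy : y ∈ T) : ZFSet.pair x y ∈ T := by
  have h1 : ({x} : ZFSet) ∈ T := by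
    have := upair_mem hT hM hx hx
    have e : ({x, x} : ZFSet) = {x} := by
      apply ZFSet.ext; intro t; simp [ZFSet.mem_insert_iff, or_self]
    rwa [e] at this
  have h2 := upair_mem hT hM hx hy
  have := upair_mem hT hM h1 h2
  rwa [ZFSet.pair]

/-- Totalized collection formula: vars `0=κ,1=f,2=g,3=α,4=y`. -/
def phiColl : memLang.BoundedFormula Empty 5 :=
  collBody 1 2 3 4 ⊔
    ∼(∃' (collBody (Fin.castSucc 1) (Fin.castSucc 2) (Fin.castSucc 3) (Fin.last 5)))

theorem realize_phiColl (hT : IsTransClass T) (xs : Fin 5 → ↥T) :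
    phiColl.Realize Empty.elim xs ↔
      (SemP (xs 1) (xs 2) (xs 3) (xs 4) ∨ ¬ ∃ y : ↥T, SemP (xs 1) (xs 2) (xs 3) y) := by
  simp only [phiColl, BoundedFormula.realize_sup, BoundedFormula.realize_not,
    BoundedFormula.realize_ex, realize_collBody hT, Fin.snoc_castSucc, Fin.snoc_last]

/-- Separation formula: vars `0=κ,1=f,2=g,3=p`. -/
def psiSep : memLang.BoundedFormula Empty 4 :=
  ∃' ((memF (mvar (Fin.last 4)) (mvar (Fin.castSucc 0))) ⊓
      collBody (Fin.castSucc 1) (Fin.castSucc 2) (Fin.last 4) (Fin.castSucc 3))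

theorem realize_psiSep (hT : IsTransClass T) (xs : Fin 4 → ↥T) :
    psiSep.Realize Empty.elim xs ↔
      ∃ a : ↥T, (a : ZFSet) ∈ (xs 0 : ZFSet) ∧ SemP (xs 1) (xs 2) a (xs 3) := by
  simp only [psiSep, BoundedFormula.realize_ex, BoundedFormula.realize_inf,
    realize_memF', realize_collBody hT, Fin.snoc_castSucc, Fin.snoc_last]

theorem exists_restr (hT : IsTransClass T) (hM : ↥T ⊨ ZFCminus)
    {κ f g : ZFSet.{u}} (hκ : κ ∈ T) (hf : f ∈ T) (hg : g ∈ T)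
    (hfunf : ∀ a v v', ZFSet.pair a v ∈ f → ZFSet.pair a v' ∈ f → v = v')
    (hfung : ∀ a w w', ZFSet.pair a w ∈ g → ZFSet.pair a w' ∈ g → w = w') :
    ∃ r ∈ T, ∀ p : ZFSet.{u}, p ∈ r ↔ ∃ a, a ∈ κ ∧ SemP f g a p := by
  classical
  have habs : ∀ z : ZFSet, z ∈ T → ∀ t, t ∈ z → t ∈ T :=
    fun z hz t ht => hT z hz (Iff.rfl.2 ht)
  have hmemT : ∀ {a v : ZFSet} {F : ZFSet}, F ∈ T → ZFSet.pair a v ∈ F →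
      ZFSet.pair a v ∈ T ∧ a ∈ T ∧ v ∈ T := by
    intro a v F hF hmem
    have hq : ZFSet.pair a v ∈ T := habs _ hF _ hmem
    have ha : a ∈ T := by
      refine habs _ (habs _ hq ({a} : ZFSet) ?_) _ (by simp)
      rw [ZFSet.pair]; simp
    have hv : v ∈ T := by
      refine habs _ (habs _ hq ({a, v} : ZFSet) ?_) _ (by simp)
      rw [ZFSet.pair]; simp
    exact ⟨hq, ha, hv⟩
  -- collection
  have hcoll := realize_mem_ZFCminus hM (show collAx 3 phiColl ∈ ZFCminus by
    right; exact Set.mem_iUnion.2 ⟨3, Set.mem_range.2 ⟨phiColl, rfl⟩⟩)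
  simp only [collAx, BoundedFormula.realize_alls, BoundedFormula.realize_all,
    BoundedFormula.realize_imp, BoundedFormula.realize_ex, BoundedFormula.realize_inf,
    realize_memF',
    BoundedFormula.realize_liftAt (show 3 ≤ 5 by norm_num),
    BoundedFormula.realize_liftAt (show 3 ≤ 5 by norm_num)] at hcoll
  have hyp : ∀ x : ↥T, (x : ZFSet) ∈ κ →
      ∃ y : ↥T, (SemP f g (x : ZFSet) (y : ZFSet) ∨ ¬ ∃ y' : ↥T, SemP f g (x : ZFSet) (y' : ZFSet)) := by
    intro x hx
    by_cases hc : ∃ y' : ↥T, SemP f g (x : ZFSet) (y' : ZFSet)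
    · obtain ⟨y', hy'⟩ := hc; exact ⟨y', Or.inl hy'⟩
    · exact ⟨x, Or.inr hc⟩
  obtain ⟨B, hB⟩ := hcoll ![⟨κ, hκ⟩, ⟨f, hf⟩, ⟨g, hg⟩] ⟨κ, hκ⟩
    (fun x hx => by
      obtain ⟨y, hy⟩ := hyp x hx
      exact ⟨y, by rw [realize_phiColl hT]; exact hy⟩)
  have hB' : ∀ x : ↥T, (x : ZFSet) ∈ κ → ∃ y : ↥T, (y : ZFSet) ∈ (B : ZFSet) ∧
      (SemP f g (x : ZFSet) (y : ZFSet) ∨ ¬ ∃ y' : ↥T, SemP f g (x : ZFSet) (y' : ZFSet)) := by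
    intro x hx
    obtain ⟨y, h1, h2⟩ := hB x hx
    rw [realize_phiColl hT] at h2
    exact ⟨y, h1, h2⟩
  -- separation
  have hsep := realize_mem_ZFCminus hM (show sepAx 3 psiSep ∈ ZFCminus by
    left; right; exact Set.mem_iUnion.2 ⟨3, Set.mem_range.2 ⟨psiSep, rfl⟩⟩)
  simp only [sepAx, BoundedFormula.realize_alls, BoundedFormula.realize_all,
    BoundedFormula.realize_ex, BoundedFormula.realize_iff, BoundedFormula.realize_inf,
    realize_memF',
    BoundedFormula.realize_liftAt (show 3 ≤ 4 by norm_num)] at hsep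
  obtain ⟨r, hr⟩ := hsep ![⟨κ, hκ⟩, ⟨f, hf⟩, ⟨g, hg⟩] B
  have hr' : ∀ t : ↥T, ((t : ZFSet) ∈ (r : ZFSet)) ↔ ((t : ZFSet) ∈ (B : ZFSet) ∧
      ∃ a : ↥T, (a : ZFSet) ∈ κ ∧ SemP f g (a : ZFSet) (t : ZFSet)) := by
    intro t
    have h0 := hr t
    rw [realize_psiSep hT] at h0
    exact h0
  refine ⟨(r : ZFSet), r.2, fun p => ?_⟩
  constructor
  · intro hp
    have hpT : p ∈ T := habs _ r.2 _ hp
    obtain ⟨-, a, ha, hsem⟩ := (hr' ⟨p, hpT⟩).1 hp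
    exact ⟨(a : ZFSet), ha, hsem⟩
  · rintro ⟨a, haκ, v, w, h1, h2, h3⟩
    have haT : a ∈ T := habs _ hκ _ haκ
    obtain ⟨-, -, hvT⟩ := hmemT hf h1
    obtain ⟨-, -, hwT⟩ := hmemT hg h2
    have hpT : p ∈ T := by rw [h3]; exact kpair_mem hT hM hvT hwT
    have hsemp : SemP f g a p := ⟨v, w, h1, h2, h3⟩
    obtain ⟨y, hyB, hy⟩ := hB' ⟨a, haT⟩ haκ
    rcases hy with hy | hy
    · obtain ⟨v', w', h1', h2', h3'⟩ := hy
      have hv : v' = v := hfunf a v' v h1' h1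
      have hw : w' = w := hfung a w' w h2' h2
      have : (y : ZFSet) = p := by rw [h3', hv, hw, ← h3]
      rw [this] at hyB
      exact (hr' ⟨p, hpT⟩).2 ⟨hyB, ⟨a, haT⟩, haκ, hsemp⟩
    · exact absurd ⟨⟨p, hpT⟩, hsemp⟩ hy
end AncientKunenAux

/-- **The ancient Kunen lemma** (Lemma 6.1 in Holy–Schlicht). If `M` is a transitive model
of `ZFC⁻`, `j : M → N` is an elementary embedding with critical point `κ` where
`κ + 1 ⊆ M ⊆ N` and `N` is transitive, and `X ∈ M` has cardinality `κ` in `M`, then the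
restriction `j ↾ X` (as a set of ordered pairs) is an element of `N`. -/
theorem ancient_kunen_lemma (M N : Set ZFSet.{u})
    (hMtr : IsTransClass M) (hNtr : IsTransClass N)
    (hMzfc : ↥M ⊨ ZFCminus) (hMN : M ⊆ N)
    (j : ↥M → ↥N) (hj : ElemEmbOf M N j)
    (κ : ZFSet.{u}) (hord : κ.IsOrdinal) (hκM : insert κ κ.toSet ⊆ M)
    (hcrit : CritAt M N j κ)
    (X : ZFSet.{u}) (hX : X ∈ M) (hcard : ∃ f ∈ M, IsBijZ κ X f) :
    ∃ r ∈ N, ∀ p : ZFSet.{u},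
      p ∈ r ↔ ∃ (x : ZFSet.{u}) (hx : x ∈ M), x ∈ X ∧ p = ZFSet.pair x (j ⟨x, hx⟩) := by
  open AncientKunenAux in
  obtain ⟨f, hfM, hfunc, hinj, hsurj⟩ := hcard
  obtain ⟨hκmem, hfix, -⟩ := hcrit
  have habsM : ∀ z : ZFSet, z ∈ M → ∀ t, t ∈ z → t ∈ M :=
    fun z hz t ht => hMtr z hz (Iff.rfl.2 ht)
  set jf : ↥N := j ⟨f, hfM⟩ with hjf
  have hNzfc : ↥N ⊨ ZFCminus := models_of_elemEmb j hj hMzfc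
  have hκN : κ ∈ N := hMN (hκM (Set.mem_insert _ _))
  have hκsubM : ∀ a, a ∈ κ → a ∈ M := fun a ha =>
    hκM (Set.mem_insert_of_mem _ (Iff.rfl.2 ha))
  -- j preserves membership
  have jmem : ∀ x y : ↥M, ((x : ZFSet) ∈ (y : ZFSet)) ↔ ((j x : ZFSet) ∈ (j y : ZFSet)) := by
    intro x y
    have h := hj 2 (memF (mvar 0) (mvar 1)) ![x, y]
    rw [realize_memF', realize_memF'] at h
    exact h
  -- j commutes with pairing
  have jpair : ∀ (q a v : ↥M), (q : ZFSet) = ZFSet.pair a v →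
      (j q : ZFSet) = ZFSet.pair (j a) (j v) := by
    intro q a v hq
    have h := hj 3 (pairFml 0 1 2) ![q, a, v]
    rw [realize_pairFml hMtr, realize_pairFml hNtr] at h
    exact h.1 hq
  -- real functionality of f
  have hfunf : ∀ a v v', ZFSet.pair a v ∈ f → ZFSet.pair a v' ∈ f → v = v' := by
    intro a v v' h1 h2
    have ha : a ∈ κ := (ZFSet.pair_mem_prod.1 (hfunc.1 h1)).1
    obtain ⟨w, -, huniq⟩ := hfunc.2 a ha
    rw [huniq v h1, huniq v' h2]
  -- real functionality of jf
  have hfung : ∀ a w w', ZFSet.pair a w ∈ (jf : ZFSet) → ZFSet.pair a w' ∈ (jf : ZFSet) →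
      w = w' := by
    have hM1 : funFml.Realize Empty.elim (fun _ => (⟨f, hfM⟩ : ↥M)) :=
      (realize_funFml hMtr _).2 hfunf
    have h := (hj 1 funFml (fun _ => ⟨f, hfM⟩)).1 hM1
    exact (realize_funFml hNtr jf).1 h
  -- key: pair a (j v) ∈ jf whenever pair a v ∈ f with a ∈ κ
  have hkey : ∀ (a v : ZFSet) (ha : a ∈ κ) (hv : v ∈ M), ZFSet.pair a v ∈ f →
      ZFSet.pair a ((j ⟨v, hv⟩ : ↥N) : ZFSet) ∈ (jf : ZFSet) := by
    intro a v ha hv hmem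
    have haM : a ∈ M := hκsubM a ha
    have hqM : ZFSet.pair a v ∈ M := habsM f hfM _ hmem
    have h1 : ((j ⟨ZFSet.pair a v, hqM⟩ : ↥N) : ZFSet) ∈ (jf : ZFSet) :=
      (jmem ⟨ZFSet.pair a v, hqM⟩ ⟨f, hfM⟩).1 hmem
    have h2 : ((j ⟨ZFSet.pair a v, hqM⟩ : ↥N) : ZFSet) =
        ZFSet.pair ((j ⟨a, haM⟩ : ↥N) : ZFSet) ((j ⟨v, hv⟩ : ↥N) : ZFSet) :=
      jpair ⟨ZFSet.pair a v, hqM⟩ ⟨a, haM⟩ ⟨v, hv⟩ rfl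
    have h3 : ((j ⟨a, haM⟩ : ↥N) : ZFSet) = a := hfix ⟨a, haM⟩ ha
    rw [h2, h3] at h1
    exact h1
  obtain ⟨r, hrN, hr⟩ := exists_restr hNtr hNzfc hκN (hMN hfM) jf.2 hfunf hfung
  refine ⟨r, hrN, fun p => ?_⟩
  rw [hr p]
  constructor
  · rintro ⟨a, ha, v, w, h1, h2, h3⟩
    have hvX : v ∈ X := (ZFSet.pair_mem_prod.1 (hfunc.1 h1)).2
    have hvM : v ∈ M := habsM X hX v hvX
    have hw : w = ((j ⟨v, hvM⟩ : ↥N) : ZFSet) :=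
      hfung a w _ h2 (hkey a v ha hvM h1)
    exact ⟨v, hvM, hvX, by rw [h3, hw]⟩
  · rintro ⟨x, hx, hxX, hp⟩
    obtain ⟨a, ha⟩ := hsurj x hxX
    have haκ : a ∈ κ := (ZFSet.pair_mem_prod.1 (hfunc.1 ha)).1
    exact ⟨a, haκ, x, _, ha, hkey a x haκ hx ha, hp⟩
end

section
/- Assume there is a cardinal κ that is not measurable but becomes measurable after adding a Cohen subset of κ⁺ (i.e., after forcing with Add(κ⁺,1)). Then κ has the strategic κ⁺-filter property: the judge has a winning strategy in the filter game of length κ⁺ on κ. Consequently, the strategic κ⁺-filter property at κ does not imply that κ is measurable (its consistency follows from a κ⁺⁺-tall cardinal). -/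
universe u

open FirstOrder FirstOrder.Language ZFSet

/-- `κ` is a measurable cardinal: there is a `<κ`-complete nonprincipal ultrafilter on `κ`. -/
def MeasurableZ (κ : ZFSet.{u}) : Prop :=
  ∃ U : Set ZFSet.{u},
    (∀ A ∈ U, A ⊆ κ) ∧ (∅ : ZFSet.{u}) ∉ U ∧
    (∀ A : ZFSet.{u}, A ⊆ κ → (A ∈ U ∨ (κ \ A) ∈ U)) ∧
    (∀ s : ZFSet.{u}, s.toSet ⊆ U → zcard s < zcard κ →
      ∃ B ∈ U, ∀ z : ZFSet, z ∈ B ↔ (z ∈ κ ∧ ∀ A, A ∈ s → z ∈ A)) ∧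
    (∀ a, a ∈ κ → ∃ A ∈ U, a ∉ A)

/-- `S` is a stationary subset of the ordinal `κ`. -/
def IsStatZ' (κ : ZFSet.{u}) (S : Set ZFSet.{u}) : Prop :=
  S ⊆ κ.toSet ∧ ∀ C : Set ZFSet.{u},
    (C ⊆ κ.toSet ∧ (∀ a ∈ κ.toSet, ∃ c ∈ C, a ∈ c) ∧
      ∀ a ∈ κ.toSet, (∃ b, b ∈ a) → (∀ b, b ∈ a → ∃ c ∈ C, b ∈ c ∧ c ∈ a) → a ∈ C) →
    (S ∩ C).Nonempty

/-- The conditions of the forcing `Add(κ⁺, 1)`: partial functions from `κ⁺` to `2` of size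
at most `κ`. -/
def CohenCond (κ κp : ZFSet.{u}) : Set ZFSet.{u} :=
  {p | (∃ d y : ZFSet.{u}, d ⊆ κp ∧ y ⊆ (insert ∅ {∅} : ZFSet.{u}) ∧ ZFSet.IsFunc d y p) ∧
    zcard p ≤ zcard κ}

/-! ### Auxiliary lemmas on von Neumann ordinals -/

theorem ZFSet.mem_toSet (a u : ZFSet.{u}) : a ∈ u.toSet ↔ a ∈ u := Iff.rfl

theorem ZFSet.toSet_subset_iff {x y : ZFSet.{u}} : x.toSet ⊆ y.toSet ↔ x ⊆ y :=
  ZFSet.coe_subset_coe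

theorem ZFSet.toSet_insert (x y : ZFSet.{u}) : (insert x y).toSet = insert x y.toSet :=
  ZFSet.coe_insert x y

theorem ZFSet.toSet_sUnion (x : ZFSet.{u}) :
    (⋃₀ x : ZFSet).toSet = ⋃₀ (ZFSet.toSet '' x.toSet) :=
  ZFSet.coe_sUnion x

theorem ZFSet.toSet_image (f : ZFSet.{u} → ZFSet.{u}) [ZFSet.Definable₁ f] (x : ZFSet.{u}) :
    (ZFSet.image f x).toSet = f '' x.toSet :=
  ZFSet.coe_image f x

theorem ZFSet.toSet_inter (x y : ZFSet.{u}) : (x ∩ y).toSet = x.toSet ∩ y.toSet :=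
  ZFSet.coe_inter x y

section OrdinalAux
open ZFSet

theorem zOrd_mem {x y : ZFSet.{u}} (hx : x.IsOrdinal) (h : y ∈ x) : y.IsOrdinal := by
  constructor
  · intro z hz w hw
    exact hx.mem_trans' hw hz h
  · intro a b c hab hbc hcy
    exact hx.mem_trans' hab hbc (hx.mem_trans hcy h)

theorem zOrd_tri : ∀ x : ZFSet.{u}, x.IsOrdinal → ∀ y : ZFSet.{u}, y.IsOrdinal →
    x ∈ y ∨ x = y ∨ y ∈ x := by
  intro x
  induction x using ZFSet.inductionOn with
  | _ x IHx =>
    intro hx y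
    induction y using ZFSet.inductionOn with
    | _ y IHy =>
      intro hy
      by_cases hxy : x ∈ y
      · exact Or.inl hxy
      by_cases hxeq : x = y
      · exact Or.inr (Or.inl hxeq)
      refine Or.inr (Or.inr ?_)
      -- y ⊆ x
      have hsub : y.toSet ⊆ x.toSet := by
        intro y' hy'
        rw [ZFSet.mem_toSet] at hy' ⊢
        rcases IHy y' hy' (zOrd_mem hy hy') with h | h | h
        · exact absurd (hy.mem_trans h hy') hxy
        · exact absurd (h ▸ hy') (h ▸ hxy)
        · exact h
      have hne : (x.toSet \ y.toSet).Nonempty := by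
        by_contra hcon
        rw [Set.not_nonempty_iff_eq_empty, Set.diff_eq_empty] at hcon
        exact hxeq (ZFSet.ext fun z => ⟨fun h => hsub ((ZFSet.mem_toSet z y).2 h),
          fun h => hcon ((ZFSet.mem_toSet z x).2 h)⟩).symm
      obtain ⟨w, hw, hwmin⟩ := ZFSet.mem_wf.has_min (x.toSet \ y.toSet) hne
      have hwx : w ∈ x := (ZFSet.mem_toSet w x).1 hw.1
      have hweq : w = y := by
        apply ZFSet.ext
        intro v
        constructor
        · intro hv
          by_contra hvy
          exact hwmin v ⟨(ZFSet.mem_toSet v x).2 (hx.mem_trans hv hwx), fun h => hvy h⟩ hv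
        · intro hv
          have hvx : v ∈ x := hsub ((ZFSet.mem_toSet v y).2 hv)
          rcases IHx v hvx (zOrd_mem hx hvx) w (zOrd_mem hx hwx) with h | h | h
          · exact h
          · exact absurd (h ▸ hv) (fun hh => hw.2 ((ZFSet.mem_toSet w y).2 hh))
          · exact absurd (hy.mem_trans h hv) (fun hh => hw.2 ((ZFSet.mem_toSet w y).2 hh))
      exact hweq ▸ hwx

theorem zOrd_succ {x : ZFSet.{u}} (hx : x.IsOrdinal) : (insert x x).IsOrdinal := by
  constructor
  · intro z hz
    rcases ZFSet.mem_insert_iff.1 hz with rfl | hz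
    · intro w hw; exact ZFSet.mem_insert_of_mem _ hw
    · intro w hw
      exact ZFSet.mem_insert_of_mem _ (hx.mem_trans hw hz)
  · intro a b c hab hbc hc
    rcases ZFSet.mem_insert_iff.1 hc with rfl | hc
    · exact hx.mem_trans hab hbc
    · exact (zOrd_mem hx hc).mem_trans hab hbc

end OrdinalAux
section CardAux
open ZFSet Cardinal

theorem zcard_le_of_subset {x y : ZFSet.{u}} (h : x ⊆ y) : zcard x ≤ zcard y :=
  Cardinal.mk_le_mk_of_subset (ZFSet.toSet_subset_iff.2 h)

theorem zsucc_mem_card {κ x : ZFSet.{u}} (hκ : IsCardZ κ)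
    (hunc : Cardinal.aleph0 < zcard κ) (hx : x ∈ κ) : insert x x ∈ κ := by
  rcases zOrd_tri (insert x x) (zOrd_succ (zOrd_mem hκ.1 hx)) κ hκ.1 with h | h | h
  · exact h
  · exfalso
    have hle : zcard κ ≤ zcard x + 1 := by
      calc zcard κ = Cardinal.mk (insert x x).toSet := by rw [← h]; rfl
        _ = Cardinal.mk (insert x x.toSet : Set ZFSet.{u}) := by rw [ZFSet.toSet_insert]
        _ ≤ zcard x + 1 := Cardinal.mk_insert_le
    by_cases hinf : Cardinal.aleph0 ≤ zcard x
    · have h1 : zcard x + 1 = zcard x :=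
        Cardinal.add_eq_left hinf (le_trans Cardinal.one_le_aleph0 hinf)
      rw [h1] at hle
      exact absurd (hκ.2 x hx) (not_lt.2 hle)
    · push_neg at hinf
      have h1 : zcard x + 1 < Cardinal.aleph0 := Cardinal.add_lt_aleph0 hinf Cardinal.one_lt_aleph0
      exact absurd (lt_trans hunc (lt_of_le_of_lt hle h1)) (lt_irrefl _)
  · rcases ZFSet.mem_insert_iff.1 h with h' | h'
    · exact absurd (h' ▸ hx) (ZFSet.mem_irrefl x)
    · exact absurd hx (ZFSet.mem_asymm h')

end CardAux
section StatAux
open ZFSet Cardinal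

theorem zstat_unbounded {κ : ZFSet.{u}} {S : Set ZFSet.{u}} (hκ : IsCardZ κ)
    (hunc : Cardinal.aleph0 < zcard κ) (hS : IsStatZ' κ S) :
    ∀ a ∈ κ, ∃ s ∈ S, a ∈ s := by
  intro a ha
  set C : Set ZFSet.{u} := {c | c ∈ κ.toSet ∧ a ∈ c} with hC
  have hclub : C ⊆ κ.toSet ∧ (∀ x ∈ κ.toSet, ∃ c ∈ C, x ∈ c) ∧
      ∀ x ∈ κ.toSet, (∃ b, b ∈ x) → (∀ b, b ∈ x → ∃ c ∈ C, b ∈ c ∧ c ∈ x) → x ∈ C := by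
    refine ⟨fun c hc => hc.1, ?_, ?_⟩
    · intro x hx
      have hxκ : x ∈ κ := (ZFSet.mem_toSet x κ).1 hx
      rcases zOrd_tri a (zOrd_mem hκ.1 ha) x (zOrd_mem hκ.1 hxκ) with h | h | h
      · exact ⟨insert x x, ⟨(ZFSet.mem_toSet _ _).2 (zsucc_mem_card hκ hunc hxκ),
          ZFSet.mem_insert_of_mem _ h⟩, ZFSet.mem_insert x x⟩
      · exact ⟨insert x x, ⟨(ZFSet.mem_toSet _ _).2 (zsucc_mem_card hκ hunc hxκ),
          h ▸ ZFSet.mem_insert x x⟩, ZFSet.mem_insert x x⟩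
      · exact ⟨insert a a, ⟨(ZFSet.mem_toSet _ _).2 (zsucc_mem_card hκ hunc ha),
          ZFSet.mem_insert a a⟩, ZFSet.mem_insert_of_mem _ h⟩
    · intro x hx hxne hcl
      obtain ⟨b, hb⟩ := hxne
      obtain ⟨c, hcC, hbc, hcx⟩ := hcl b hb
      have hxκ : x ∈ κ := (ZFSet.mem_toSet x κ).1 hx
      exact ⟨hx, (zOrd_mem hκ.1 hxκ).mem_trans hcC.2 hcx⟩
  obtain ⟨s, hsS, hsC⟩ := hS.2 C hclub
  exact ⟨s, hsS, hsC.2⟩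

theorem zstat_size {κ : ZFSet.{u}} {S : Set ZFSet.{u}} (hκ : IsCardZ κ)
    (hunc : Cardinal.aleph0 < zcard κ) (hreg : (zcard κ).IsRegular)
    (hS : IsStatZ' κ S) : Cardinal.mk ↥S = zcard κ := by
  refine le_antisymm (Cardinal.mk_le_mk_of_subset hS.1) ?_
  by_contra hlt
  push_neg at hlt
  have hcov : κ.toSet ⊆ ⋃ s : ↥S, ((s : ZFSet.{u}).toSet) := by
    intro a ha
    obtain ⟨s, hsS, has⟩ := zstat_unbounded hκ hunc hS a ((ZFSet.mem_toSet a κ).1 ha)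
    exact Set.mem_iUnion.2 ⟨⟨s, hsS⟩, (ZFSet.mem_toSet _ _).2 has⟩
  have h1 : zcard κ ≤ Cardinal.sum fun s : ↥S => Cardinal.mk ((s : ZFSet.{u}).toSet) :=
    (Cardinal.mk_le_mk_of_subset hcov).trans Cardinal.mk_iUnion_le_sum_mk
  have h2 : Cardinal.sum (fun s : ↥S => Cardinal.mk ((s : ZFSet.{u}).toSet)) < zcard κ :=
    Cardinal.sum_lt_of_isRegular hreg hlt fun s =>
      hκ.2 _ ((ZFSet.mem_toSet _ _).1 (hS.1 s.2))
  exact absurd (h1.trans_lt h2) (lt_irrefl _)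

theorem zbound {κ κp : ZFSet.{u}} (hκp : IsCardZ κp)
    (hsucc : zcard κp = Order.succ (zcard κ)) (hunc : Cardinal.aleph0 < zcard κ)
    {α : Type (u + 1)} (ι : α → ZFSet.{u}) (hα : Cardinal.mk α ≤ zcard κ)
    (hι : ∀ a, ι a ∈ κp) : ∃ i, i ∈ κp ∧ ∀ a, ι a ∈ i ∨ ι a = i := by
  by_contra hcon
  push_neg at hcon
  have hcov : κp.toSet ⊆ ⋃ a : α, ((ι a).toSet) := by
    intro i hi
    have hiκp : i ∈ κp := (ZFSet.mem_toSet i κp).1 hi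
    obtain ⟨a, ha1, ha2⟩ := hcon i hiκp
    have : i ∈ ι a := by
      rcases zOrd_tri (ι a) (zOrd_mem hκp.1 (hι a)) i (zOrd_mem hκp.1 hiκp) with h | h | h
      · exact absurd h ha1
      · exact absurd h ha2
      · exact h
    exact Set.mem_iUnion.2 ⟨a, (ZFSet.mem_toSet _ _).2 this⟩
  have h1 : zcard κp ≤ Cardinal.sum fun a : α => Cardinal.mk ((ι a).toSet) :=
    (Cardinal.mk_le_mk_of_subset hcov).trans Cardinal.mk_iUnion_le_sum_mk
  have h2 : Cardinal.sum (fun a : α => Cardinal.mk ((ι a).toSet)) ≤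
      Cardinal.sum (fun _ : α => zcard κ) := by
    refine Cardinal.sum_le_sum _ _ fun a => ?_
    have := hκp.2 _ (hι a)
    rw [hsucc] at this
    exact Order.lt_succ_iff.1 this
  rw [Cardinal.sum_const' α (zcard κ)] at h2
  have h3 : Cardinal.mk α * zcard κ ≤ zcard κ * zcard κ := by
    exact mul_le_mul_left hα _
  rw [Cardinal.mul_eq_self hunc.le] at h3
  have : zcard κp ≤ zcard κ := (h1.trans h2).trans h3
  rw [hsucc] at this
  exact absurd this (not_le.2 (Order.lt_succ _))

end StatAux
section ChainAux
open ZFSet Cardinal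

theorem cohen_chain_union {κ κp : ZFSet.{u}} (hunc : Cardinal.aleph0 < zcard κ)
    (b : ZFSet.{u}) (R : ZFSet.{u} → ZFSet.{u}) (hb : zcard b ≤ zcard κ)
    (hmem : ∀ x ∈ b, R x ∈ CohenCond κ κp)
    (hchain : ∀ x ∈ b, ∀ y ∈ b, R x ⊆ R y ∨ R y ⊆ R x) :
    (⋃₀ @ZFSet.image R (Classical.allZFSetDefinable _) b : ZFSet) ∈ CohenCond κ κp ∧
      ∀ x ∈ b, R x ⊆ ⋃₀ @ZFSet.image R (Classical.allZFSetDefinable _) b := by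
  classical
  letI : ZFSet.Definable₁ R := Classical.allZFSetDefinable _
  set u := (⋃₀ ZFSet.image R b : ZFSet) with hu
  have hsub : ∀ x ∈ b, R x ⊆ u := fun x hx z hz =>
    ZFSet.mem_sUnion.2 ⟨R x, ZFSet.mem_image.2 ⟨x, hx, rfl⟩, hz⟩
  have humem : ∀ z ∈ u, ∃ x ∈ b, z ∈ R x := by
    intro z hz
    obtain ⟨w, hw, hzw⟩ := ZFSet.mem_sUnion.1 hz
    obtain ⟨x, hx, rfl⟩ := ZFSet.mem_image.1 hw
    exact ⟨x, hx, hzw⟩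
  have hpair : ∀ z ∈ u, ∃ c w, c ∈ κp ∧ w ∈ (insert ∅ {∅} : ZFSet.{u}) ∧
      z = ZFSet.pair c w := by
    intro z hz
    obtain ⟨x, hx, hzx⟩ := humem z hz
    obtain ⟨⟨d, y, hd, hy, hf⟩, -⟩ := hmem x hx
    obtain ⟨c, hc, w, hw, rfl⟩ := ZFSet.mem_prod.1 (hf.1 hzx)
    exact ⟨c, w, hd hc, hy hw, rfl⟩
  have huniqu : ∀ c w w', ZFSet.pair c w ∈ u → ZFSet.pair c w' ∈ u → w = w' := by
    intro c w w' hw hw'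
    obtain ⟨x1, hx1, h1⟩ := humem _ hw
    obtain ⟨x2, hx2, h2⟩ := humem _ hw'
    have key : ∀ {x : ZFSet}, x ∈ b → ZFSet.pair c w ∈ R x → ZFSet.pair c w' ∈ R x →
        w = w' := by
      intro x hx hwx hwx'
      obtain ⟨⟨d, y, hd, hy, hf⟩, -⟩ := hmem x hx
      have hcd : c ∈ d := (ZFSet.pair_mem_prod.1 (hf.1 hwx)).1
      obtain ⟨v, hv, huniq⟩ := hf.2 c hcd
      rw [huniq w hwx, huniq w' hwx']
    rcases hchain x1 hx1 x2 hx2 with hss | hss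
    · exact key hx2 (hss h1) h2
    · exact key hx1 h1 (hss h2)
  have hcard : zcard u ≤ zcard κ := by
    have htoSet : u.toSet = ⋃ x ∈ b.toSet, (R x).toSet := by
      rw [hu, ZFSet.toSet_sUnion, ZFSet.toSet_image, Set.sUnion_image, Set.biUnion_image]
    show Cardinal.mk u.toSet ≤ zcard κ
    rw [htoSet, Set.biUnion_eq_iUnion]
    refine le_trans Cardinal.mk_iUnion_le_sum_mk ?_
    have h2 : Cardinal.sum (fun x : b.toSet => Cardinal.mk ((R (x : ZFSet.{u})).toSet)) ≤
        Cardinal.sum (fun _ : b.toSet => zcard κ) :=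
      Cardinal.sum_le_sum _ _ fun x => (hmem _ ((ZFSet.mem_toSet _ _).1 x.2)).2
    rw [Cardinal.sum_const' _ (zcard κ)] at h2
    refine h2.trans ?_
    calc Cardinal.mk b.toSet * zcard κ ≤ zcard κ * zcard κ := mul_le_mul_left hb _
      _ = zcard κ := Cardinal.mul_eq_self hunc.le
  refine ⟨⟨⟨ZFSet.sep (fun c => ∃ w, ZFSet.pair c w ∈ u) κp, insert ∅ {∅},
      fun c hc => (ZFSet.mem_sep.1 hc).1, fun w hw => hw, ?_, ?_⟩, hcard⟩, hsub⟩
  · intro z hz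
    obtain ⟨c, w, hcκp, hw, rfl⟩ := hpair z hz
    exact ZFSet.pair_mem_prod.2 ⟨ZFSet.mem_sep.2 ⟨hcκp, w, hz⟩, hw⟩
  · intro c hc
    obtain ⟨hcκp, w, hw⟩ := ZFSet.mem_sep.1 hc
    exact ⟨w, hw, fun w' hw' => huniqu c w' w hw' hw⟩
end ChainAux
section ExtendAux
open ZFSet Cardinal

theorem extend_decide {κ κp : ZFSet.{u}} (Force : ZFSet.{u} → ZFSet.{u} → Prop)
    (hκ : IsCardZ κ) (hunc : Cardinal.aleph0 < zcard κ)
    (hmono : ∀ p q A, p ∈ CohenCond κ κp → q ∈ CohenCond κ κp → p ⊆ q →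
      Force p A → Force q A)
    (hdec : ∀ p ∈ CohenCond κ κp, ∀ A : ZFSet.{u}, A ⊆ κ →
      ∃ q ∈ CohenCond κ κp, p ⊆ q ∧ (Force q A ∨ Force q (κ \ A)))
    (r : ZFSet.{u}) (hr : r ∈ CohenCond κ κp) (D : Set ZFSet.{u})
    (hD : ∀ A ∈ D, A ⊆ κ) (hcard : Cardinal.mk ↥D ≤ zcard κ) :
    ∃ q ∈ CohenCond κ κp, r ⊆ q ∧ ∀ A ∈ D, Force q A ∨ Force q (κ \ A) := by
  classical
  obtain ⟨i⟩ := (Cardinal.le_def ↥D ↥κ.toSet).1 hcard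
  set e : ZFSet.{u} → ZFSet.{u} := fun a =>
    if h : ∃ A : ↥D, ((i A : ↥κ.toSet) : ZFSet.{u}) = a then ((h.choose : ↥D) : ZFSet.{u})
    else ∅ with he
  have he1 : ∀ a, e a ⊆ κ := by
    intro a
    by_cases h : ∃ A : ↥D, ((i A : ↥κ.toSet) : ZFSet.{u}) = a
    · have hh : e a = ((h.choose : ↥D) : ZFSet.{u}) := dif_pos h
      rw [hh]; exact hD _ h.choose.2
    · have hh : e a = ∅ := dif_neg h
      rw [hh]; intro z hz; exact absurd hz (ZFSet.notMem_empty z)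
  have he2 : ∀ A ∈ D, ∃ a ∈ κ, e a = A := by
    intro A hA
    refine ⟨(i ⟨A, hA⟩ : ↥κ.toSet), (ZFSet.mem_toSet _ _).1 (i ⟨A, hA⟩).2, ?_⟩
    have hex : ∃ A' : ↥D, ((i A' : ↥κ.toSet) : ZFSet.{u}) = ((i ⟨A, hA⟩ : ↥κ.toSet) : ZFSet.{u}) :=
      ⟨⟨A, hA⟩, rfl⟩
    have hh : e ((i ⟨A, hA⟩ : ↥κ.toSet) : ZFSet.{u}) = ((hex.choose : ↥D) : ZFSet.{u}) :=
      dif_pos hex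
    rw [hh]
    have h1 : i hex.choose = i ⟨A, hA⟩ := Subtype.coe_injective hex.choose_spec
    have h2 : hex.choose = ⟨A, hA⟩ := i.injective h1
    rw [h2]
  set F : (a : ZFSet.{u}) → ((a' : ZFSet.{u}) → a' ∈ a → ZFSet.{u}) → ZFSet.{u} := fun a rec =>
    Classical.epsilon fun q => q ∈ CohenCond κ κp ∧ r ⊆ q ∧
      (∀ a' (h : a' ∈ a), rec a' h ⊆ q) ∧ (Force q (e a) ∨ Force q (κ \ e a)) with hF
  set Q : ZFSet.{u} → ZFSet.{u} := fun a => ZFSet.mem_wf.fix F a with hQ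
  have Qeq : ∀ a, Q a = Classical.epsilon fun q => q ∈ CohenCond κ κp ∧ r ⊆ q ∧
      (∀ a' ∈ a, Q a' ⊆ q) ∧ (Force q (e a) ∨ Force q (κ \ e a)) := fun a =>
    WellFounded.fix_eq _ _ _
  have QSpec : ∀ a, a ∈ κ → Q a ∈ CohenCond κ κp ∧ r ⊆ Q a ∧
      (∀ a' ∈ a, Q a' ⊆ Q a) ∧ (Force (Q a) (e a) ∨ Force (Q a) (κ \ e a)) := by
    intro a
    induction a using ZFSet.inductionOn with
    | _ a IH =>
      intro ha
      set R : ZFSet.{u} → ZFSet.{u} := fun x => if x = a then r else Q x with hR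
      have hmemκ : ∀ x ∈ a, x ∈ κ := fun x hx => hκ.1.mem_trans hx ha
      have hins : zcard (insert a a) ≤ zcard κ := by
        show Cardinal.mk (insert a a).toSet ≤ zcard κ
        rw [ZFSet.toSet_insert]
        refine le_trans Cardinal.mk_insert_le ?_
        have h1 : zcard a ≤ zcard κ := (hκ.2 a ha).le
        have h2 : (1 : Cardinal.{u+1}) ≤ zcard κ :=
          le_trans Cardinal.one_le_aleph0 hunc.le
        calc Cardinal.mk a.toSet + 1 ≤ zcard κ + zcard κ := add_le_add h1 h2
          _ = zcard κ := Cardinal.add_eq_self hunc.le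
      have hmemR : ∀ x ∈ insert a a, R x ∈ CohenCond κ κp := by
        intro x hx
        rcases ZFSet.mem_insert_iff.1 hx with rfl | hx'
        · rw [hR]; simpa using hr
        · have hxa : x ≠ a := fun h => ZFSet.mem_irrefl a (h ▸ hx')
          rw [hR]
          simp only [if_neg hxa]
          exact (IH x hx' (hmemκ x hx')).1
      have hchainR : ∀ x ∈ insert a a, ∀ y ∈ insert a a, R x ⊆ R y ∨ R y ⊆ R x := by
        have hrQ : ∀ x ∈ a, r ⊆ Q x := fun x hx => (IH x hx (hmemκ x hx)).2.1
        have hQQ : ∀ x ∈ a, ∀ y ∈ a, Q x ⊆ Q y ∨ Q y ⊆ Q x := by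
          intro x hx y hy
          rcases zOrd_tri x (zOrd_mem hκ.1 (hmemκ x hx)) y (zOrd_mem hκ.1 (hmemκ y hy))
            with h | h | h
          · exact Or.inl ((IH y hy (hmemκ y hy)).2.2.1 x h)
          · exact Or.inl (h ▸ subset_rfl)
          · exact Or.inr ((IH x hx (hmemκ x hx)).2.2.1 y h)
        intro x hx y hy
        rcases ZFSet.mem_insert_iff.1 hx with rfl | hx' <;>
          rcases ZFSet.mem_insert_iff.1 hy with h | hy'
        · exact Or.inl (h ▸ subset_rfl)
        · have hya : y ≠ x := fun hh => ZFSet.mem_irrefl x (hh ▸ hy')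
          rw [hR]; simp only [if_pos rfl, if_neg hya]
          exact Or.inl (hrQ y hy')
        · subst h
          have hxa : x ≠ y := fun hh => ZFSet.mem_irrefl y (hh ▸ hx')
          rw [hR]; simp only [if_pos rfl, if_neg hxa]
          exact Or.inr (hrQ x hx')
        · have hxa : x ≠ a := fun hh => ZFSet.mem_irrefl a (hh ▸ hx')
          have hya : y ≠ a := fun hh => ZFSet.mem_irrefl a (hh ▸ hy')
          rw [hR]; simp only [if_neg hxa, if_neg hya]
          exact hQQ x hx' y hy'
      obtain ⟨hu, hsubu⟩ := cohen_chain_union hunc (insert a a) R hins hmemR hchainR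
      obtain ⟨q, hq, huq, hdq⟩ := hdec _ hu (e a) (he1 a)
      have hrq : r ⊆ q := by
        have h1 : R a ⊆ _ := hsubu a (ZFSet.mem_insert a a)
        rw [hR] at h1
        simp only [if_pos rfl] at h1
        exact h1.trans huq
      have hQq : ∀ a' ∈ a, Q a' ⊆ q := by
        intro a' ha'
        have hne : a' ≠ a := fun hh => ZFSet.mem_irrefl a (hh ▸ ha')
        have h1 : R a' ⊆ _ := hsubu a' (ZFSet.mem_insert_of_mem _ ha')
        rw [hR] at h1
        simp only [if_neg hne] at h1
        exact h1.trans huq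
      rw [Qeq a]
      exact Classical.epsilon_spec (⟨q, hq, hrq, hQq, hdq⟩ :
        ∃ q, q ∈ CohenCond κ κp ∧ r ⊆ q ∧ (∀ a' ∈ a, Q a' ⊆ q) ∧
          (Force q (e a) ∨ Force q (κ \ e a)))
  have hκne : ∃ x, x ∈ κ := by
    have h0 : (0 : Cardinal.{u+1}) < zcard κ := lt_trans Cardinal.aleph0_pos hunc
    have hne : Cardinal.mk ↥κ.toSet ≠ 0 := h0.ne'
    obtain ⟨x⟩ := Cardinal.mk_ne_zero_iff.1 hne
    exact ⟨x, (ZFSet.mem_toSet _ _).1 x.2⟩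
  obtain ⟨x₀, hx₀⟩ := hκne
  have hchainQ : ∀ x ∈ κ, ∀ y ∈ κ, Q x ⊆ Q y ∨ Q y ⊆ Q x := by
    intro x hx y hy
    rcases zOrd_tri x (zOrd_mem hκ.1 hx) y (zOrd_mem hκ.1 hy) with h | h | h
    · exact Or.inl ((QSpec y hy).2.2.1 x h)
    · exact Or.inl (h ▸ subset_rfl)
    · exact Or.inr ((QSpec x hx).2.2.1 y h)
  obtain ⟨hu, hsubu⟩ := cohen_chain_union hunc κ Q le_rfl
    (fun x hx => (QSpec x hx).1) hchainQ
  refine ⟨_, hu, ((QSpec x₀ hx₀).2.1).trans (hsubu x₀ hx₀), ?_⟩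
  intro A hA
  obtain ⟨a, haκ, hea⟩ := he2 A hA
  have hdec' := (QSpec a haκ).2.2.2
  rw [hea] at hdec'
  rcases hdec' with h | h
  · exact Or.inl (hmono _ _ _ (QSpec a haκ).1 hu (hsubu a haκ) h)
  · exact Or.inr (hmono _ _ _ (QSpec a haκ).1 hu (hsubu a haκ) h)
end ExtendAux
section StrategyAux
open ZFSet Cardinal

/-- The descending sequence of Cohen conditions used by the judge, defined by
`∈`-recursion via `Classical.epsilon`. -/
noncomputable def Pstrat (Force : ZFSet.{u} → ZFSet.{u} → Prop) (κ κp : ZFSet.{u}) :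
    ZFSet.{u} → (ZFSet.{u} → Set ZFSet.{u}) → ZFSet.{u} := fun b =>
  ZFSet.mem_wf.fix (C := fun _ => (ZFSet.{u} → Set ZFSet.{u}) → ZFSet.{u})
    (fun b rec g => Classical.epsilon fun q => q ∈ CohenCond κ κp ∧
      (∀ j (h : j ∈ b), rec j h (restrLe g j) ⊆ q) ∧
      (∀ A : ZFSet.{u}, A ⊆ κ → (∃ j, (j ∈ b ∨ j = b) ∧ A ∈ g j) →
        (Force q A ∨ Force q (κ \ A)))) b

/-- The specification of the judge's conditions. -/
def PstratSpec (Force : ZFSet.{u} → ZFSet.{u} → Prop) (κ κp b : ZFSet.{u})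
    (g : ZFSet.{u} → Set ZFSet.{u}) (q : ZFSet.{u}) : Prop :=
  q ∈ CohenCond κ κp ∧ (∀ j ∈ b, Pstrat Force κ κp j (restrLe g j) ⊆ q) ∧
    (∀ A : ZFSet.{u}, A ⊆ κ → (∃ j, (j ∈ b ∨ j = b) ∧ A ∈ g j) →
      (Force q A ∨ Force q (κ \ A)))

theorem Pstrat_eq (Force : ZFSet.{u} → ZFSet.{u} → Prop) (κ κp b : ZFSet.{u})
    (g : ZFSet.{u} → Set ZFSet.{u}) :
    Pstrat Force κ κp b g = Classical.epsilon (PstratSpec Force κ κp b g) :=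
  congrFun (WellFounded.fix_eq (C := fun _ => (ZFSet.{u} → Set ZFSet.{u}) → ZFSet.{u}) _ _ _) g

theorem restrLe_restrLe {Ms : ZFSet.{u} → Set ZFSet.{u}} {i j : ZFSet.{u}}
    (hi : i.IsOrdinal) (hj : j ∈ i) : restrLe (restrLe Ms i) j = restrLe Ms j := by
  funext b
  unfold restrLe
  by_cases h : b ∈ j ∨ b = j
  · have hb : b ∈ i ∨ b = i := Or.inl (by
      rcases h with h | rfl
      · exact hi.mem_trans h hj
      · exact hj)
    rw [if_pos h, if_pos h, if_pos hb]
  · rw [if_neg h, if_neg h]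

theorem zcard_lt_succ {κ κp : ZFSet.{u}} (hκp : IsCardZ κp)
    (hsucc : zcard κp = Order.succ (zcard κ)) {i : ZFSet.{u}} (hi : i ∈ κp) :
    zcard i ≤ zcard κ := by
  have h := hκp.2 i hi
  rw [hsucc] at h
  exact Order.lt_succ_iff.1 h

theorem zinsert_card {κ : ZFSet.{u}} (hunc : Cardinal.aleph0 < zcard κ) {i : ZFSet.{u}}
    (hi : zcard i ≤ zcard κ) : Cardinal.mk ↥(insert i i : ZFSet.{u}).toSet ≤ zcard κ := by
  rw [ZFSet.toSet_insert]
  refine le_trans Cardinal.mk_insert_le ?_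
  have h2 : (1 : Cardinal.{u+1}) ≤ zcard κ := le_trans Cardinal.one_le_aleph0 hunc.le
  calc Cardinal.mk i.toSet + 1 ≤ zcard κ + zcard κ := add_le_add hi h2
    _ = zcard κ := Cardinal.add_eq_self hunc.le

theorem Pstrat_spec_holds {κ κp : ZFSet.{u}} (Force : ZFSet.{u} → ZFSet.{u} → Prop)
    (hκ : IsCardZ κ) (hunc : Cardinal.aleph0 < zcard κ) (hκp : IsCardZ κp)
    (hsucc : zcard κp = Order.succ (zcard κ))
    (hmono : ∀ p q A, p ∈ CohenCond κ κp → q ∈ CohenCond κ κp → p ⊆ q →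
      Force p A → Force q A)
    (hdec : ∀ p ∈ CohenCond κ κp, ∀ A : ZFSet.{u}, A ⊆ κ →
      ∃ q ∈ CohenCond κ κp, p ⊆ q ∧ (Force q A ∨ Force q (κ \ A))) :
    ∀ i, i ∈ κp → ∀ Ms : ZFSet.{u} → Set ZFSet.{u},
      (∀ j, (j ∈ i ∨ j = i) → Cardinal.mk ↥(Ms j) ≤ zcard κ) →
      PstratSpec Force κ κp i (restrLe Ms i) (Pstrat Force κ κp i (restrLe Ms i)) := by
  intro i
  induction i using ZFSet.inductionOn with
  | _ i IH =>
    intro hiκp Ms hMs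
    have hiord : i.IsOrdinal := zOrd_mem hκp.1 hiκp
    set R : ZFSet.{u} → ZFSet.{u} := fun j => Pstrat Force κ κp j (restrLe Ms j) with hR
    have hprev : ∀ j ∈ i, PstratSpec Force κ κp j (restrLe Ms j) (R j) := by
      intro j hj
      refine IH j hj (hκp.1.mem_trans hj hiκp) Ms ?_
      intro j' hj'
      refine hMs j' (Or.inl ?_)
      rcases hj' with hj' | rfl
      · exact hiord.mem_trans hj' hj
      · exact hj
    have hicard : zcard i ≤ zcard κ := zcard_lt_succ hκp hsucc hiκp
    have hmemR : ∀ j ∈ i, R j ∈ CohenCond κ κp := fun j hj => (hprev j hj).1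
    have hchain : ∀ x ∈ i, ∀ y ∈ i, R x ⊆ R y ∨ R y ⊆ R x := by
      intro x hx y hy
      have hxo := zOrd_mem hiord hx
      have hyo := zOrd_mem hiord hy
      rcases zOrd_tri x hxo y hyo with h | h | h
      · refine Or.inl ?_
        have := (hprev y hy).2.1 x h
        rwa [restrLe_restrLe hyo h] at this
      · exact Or.inl (h ▸ subset_rfl)
      · refine Or.inr ?_
        have := (hprev x hx).2.1 y h
        rwa [restrLe_restrLe hxo h] at this
    obtain ⟨hu, hsubu⟩ := cohen_chain_union hunc i R hicard hmemR hchain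
    set D : Set ZFSet.{u} := {A | A ⊆ κ ∧ ∃ j, (j ∈ i ∨ j = i) ∧ A ∈ restrLe Ms i j} with hD
    have hDsub : ∀ A ∈ D, A ⊆ κ := fun A hA => hA.1
    have hDcard : Cardinal.mk ↥D ≤ zcard κ := by
      have hcov : D ⊆ ⋃ x : ↥(insert i i : ZFSet.{u}).toSet, Ms (x : ZFSet.{u}) := by
        rintro A ⟨hAκ, j, hj, hmem⟩
        have hmem' : A ∈ Ms j := by
          unfold restrLe at hmem
          rwa [if_pos hj] at hmem
        refine Set.mem_iUnion.2 ⟨⟨j, ?_⟩, hmem'⟩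
        rw [ZFSet.mem_toSet, ZFSet.mem_insert_iff]
        rcases hj with h | h
        · exact Or.inr h
        · exact Or.inl h
      refine le_trans (Cardinal.mk_le_mk_of_subset hcov) ?_
      refine le_trans Cardinal.mk_iUnion_le_sum_mk ?_
      have h2 : Cardinal.sum
            (fun x : ↥(insert i i : ZFSet.{u}).toSet => Cardinal.mk (Ms (x : ZFSet.{u}))) ≤
          Cardinal.sum (fun _ : ↥(insert i i : ZFSet.{u}).toSet => zcard κ) := by
        refine Cardinal.sum_le_sum _ _ fun x => ?_
        have hx := (ZFSet.mem_toSet _ _).1 x.2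
        rcases ZFSet.mem_insert_iff.1 hx with h | h
        · exact hMs _ (Or.inr h)
        · exact hMs _ (Or.inl h)
      rw [Cardinal.sum_const' _ (zcard κ)] at h2
      refine h2.trans ?_
      calc Cardinal.mk ↥(insert i i : ZFSet.{u}).toSet * zcard κ ≤ zcard κ * zcard κ :=
          mul_le_mul_left (zinsert_card hunc hicard) _
        _ = zcard κ := Cardinal.mul_eq_self hunc.le
    obtain ⟨q, hq, hborder, hdecq⟩ :=
      extend_decide Force hκ hunc hmono hdec _ hu D hDsub hDcard
    rw [Pstrat_eq]
    refine Classical.epsilon_spec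
      (⟨q, hq, ?_, ?_⟩ : ∃ q', PstratSpec Force κ κp i (restrLe Ms i) q')
    · intro j hj
      rw [restrLe_restrLe hiord hj]
      exact (hsubu j hj).trans hborder
    · intro A hAκ hex
      exact hdecq A ⟨hAκ, hex⟩

end StrategyAux
section FilterAux
open ZFSet Cardinal

theorem zforce_filter {κ κp : ZFSet.{u}} (Force : ZFSet.{u} → ZFSet.{u} → Prop)
    (hκ : IsCardZ κ) (hunc : Cardinal.aleph0 < zcard κ) (hreg : (zcard κ).IsRegular)
    (hstat : ∀ p ∈ CohenCond κ κp, ∀ A : ZFSet.{u}, Force p A → A ⊆ κ ∧ IsStatZ' κ A.toSet)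
    (hinter : ∀ p ∈ CohenCond κ κp, ∀ A B : ZFSet.{u}, Force p A → Force p B →
      Force p (A ∩ B))
    {F : Set ZFSet.{u}}
    (hF : ∀ n (A : Fin n → ZFSet.{u}), (∀ i, A i ∈ F) →
      ∃ p ∈ CohenCond κ κp, ∀ i, Force p (A i))
    (hFst : ∀ A ∈ F, ∃ p ∈ CohenCond κ κp, Force p A) :
    IsZFilter κ F := by
  constructor
  · intro A hA
    obtain ⟨p, hp, hfA⟩ := hFst A hA
    exact (hstat p hp A hfA).1
  · intro n A hAmem
    match n with
    | 0 =>
      have h0 : (⋂ i : Fin 0, (A i).toSet) = Set.univ := Set.iInter_of_empty _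
      rw [h0, Set.inter_univ]
      rfl
    | Nat.succ n =>
      obtain ⟨p, hp, hfA⟩ := hF (n + 1) A hAmem
      have key : ∀ m (A : Fin (m + 1) → ZFSet.{u}), (∀ i, Force p (A i)) →
          ∃ B, Force p B ∧ B.toSet = ⋂ i, (A i).toSet := by
        intro m
        induction m with
        | zero =>
          intro A hA
          refine ⟨A 0, hA 0, ?_⟩
          ext z
          simp [Set.mem_iInter, Fin.forall_fin_one]
        | succ m IHm =>
          intro A hA
          obtain ⟨B, hB, hBt⟩ := IHm (fun i => A i.succ) (fun i => hA i.succ)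
          refine ⟨A 0 ∩ B, hinter p hp _ _ (hA 0) hB, ?_⟩
          rw [ZFSet.toSet_inter, hBt]
          ext z
          simp [Set.mem_iInter, Fin.forall_fin_succ]
      obtain ⟨B, hB, hBt⟩ := key n A hfA
      have hstatB := hstat p hp B hB
      have hsize : Cardinal.mk ↥B.toSet = zcard κ := zstat_size hκ hunc hreg hstatB.2
      have heq : κ.toSet ∩ ⋂ i, (A i).toSet = B.toSet := by
        rw [← hBt]
        exact Set.inter_eq_self_of_subset_right (ZFSet.toSet_subset_iff.2 hstatB.1)
      rw [heq]
      exact hsize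
end FilterAux
/-- **Proposition 8.2** (Hamkins, in Holy–Schlicht). Suppose that `κ` is not measurable,
but becomes measurable after forcing with `Add(κ⁺, 1)` — the latter hypothesis being
rendered by the existence of a (name for a) normal measure `U̇` on `κ`, i.e. a relation
`Force p A` ("`p ⊩ Ǎ ∈ U̇`") on Cohen conditions which is monotone, decides every subset
of `κ`, is consistent, forces only stationary subsets of `κ`, and is closed under
intersections and diagonal intersections.  Then the judge has a winning strategy in the
filter game of length `κ⁺` on `κ`, i.e. `κ` has the strategic `κ⁺`-filter property;
consequently the strategic `κ⁺`-filter property at `κ` does not imply that `κ` is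
measurable. -/
theorem strategic_filter_property_not_measurable (κ κp : ZFSet.{u})
    (hκ : IsCardZ κ) (hunc : Cardinal.aleph0 < zcard κ)
    (hreg : (zcard κ).IsRegular) (hκp : IsCardZ κp) (hsucc : zcard κp = Order.succ (zcard κ))
    (hnotmeas : ¬ MeasurableZ κ)
    (hname : ∃ Force : ZFSet.{u} → ZFSet.{u} → Prop,
      (∀ p q A, p ∈ CohenCond κ κp → q ∈ CohenCond κ κp → p ⊆ q →
        Force p A → Force q A) ∧
      (∀ p ∈ CohenCond κ κp, ∀ A : ZFSet.{u}, A ⊆ κ →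
        ∃ q ∈ CohenCond κ κp, p ⊆ q ∧ (Force q A ∨ Force q (κ \ A))) ∧
      (∀ p ∈ CohenCond κ κp, ∀ A : ZFSet.{u}, A ⊆ κ →
        ¬ (Force p A ∧ Force p (κ \ A))) ∧
      (∀ p ∈ CohenCond κ κp, ∀ A : ZFSet.{u}, Force p A → A ⊆ κ ∧ IsStatZ' κ A.toSet) ∧
      (∀ p ∈ CohenCond κ κp, ∀ A B : ZFSet.{u}, Force p A → Force p B →
        Force p (A ∩ B)) ∧
      (∀ p ∈ CohenCond κ κp, ∀ m : ZFSet.{u},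
        ((∃ y, ZFSet.IsFunc κ y m) ∧ ∀ b v, b ∈ κ → ZFSet.pair b v ∈ m → Force p v) →
        Force p (diagZ κ m))) :
    StratFilterPropZ κ κp ∧ ¬ MeasurableZ κ := by
  obtain ⟨Force, hmono, hdec, hcons, hstat, hinter, hdiag⟩ := hname
  refine ⟨?_, hnotmeas⟩
  intro θ hθ hκθ
  classical
  refine ⟨fun b g => {A | Force (Pstrat Force κ κp b g) A}, ?_⟩
  intro Ms
  have hκpord := hκp.1
  -- common facts
  have hstage : ∀ i, i ∈ κp →
      (∀ j, (j ∈ i ∨ j = i) → Cardinal.mk ↥(Ms j) ≤ zcard κ) →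
      PstratSpec Force κ κp i (restrLe Ms i)
        (Pstrat Force κ κp i (restrLe Ms i)) := fun i hi hcard =>
    Pstrat_spec_holds Force hκ hunc hκp hsucc hmono hdec i hi Ms hcard
  constructor
  · -- the judge's moves are legal
    intro i hi hchal
    have hiκp : i ∈ κp := (ZFSet.mem_toSet i κp).1 hi
    have hiord : i.IsOrdinal := zOrd_mem hκpord hiκp
    have hMscard : ∀ j, (j ∈ i ∨ j = i) → Cardinal.mk ↥(Ms j) ≤ zcard κ := fun j hj =>
      le_of_eq (hchal j hj).2.1.1.1
    have hle_trans : ∀ j, (j ∈ i ∨ j = i) → ∀ j', (j' ∈ j ∨ j' = j) →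
        (j' ∈ i ∨ j' = i) := by
      intro j hj j' hj'
      rcases hj' with hj' | rfl
      · rcases hj with hj | rfl
        · exact Or.inl (hiord.mem_trans hj' hj)
        · exact Or.inl hj'
      · exact hj
    have hjκp : ∀ j, (j ∈ i ∨ j = i) → j ∈ κp := by
      intro j hj
      rcases hj with hj | rfl
      · exact hκpord.mem_trans hj hiκp
      · exact hiκp
    have hspec : ∀ j, (j ∈ i ∨ j = i) →
        PstratSpec Force κ κp j (restrLe Ms j)
          (Pstrat Force κ κp j (restrLe Ms j)) := fun j hj =>
      hstage j (hjκp j hj) (fun j' hj' => hMscard j' (hle_trans j hj j' hj'))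
    have hPCohen : ∀ j, (j ∈ i ∨ j = i) →
        Pstrat Force κ κp j (restrLe Ms j) ∈ CohenCond κ κp := fun j hj => (hspec j hj).1
    refine ⟨?_, ?_, ?_⟩
    · -- a filter
      refine zforce_filter Force hκ hunc hreg hstat hinter ?_ ?_
      · intro n A hAmem
        exact ⟨Pstrat Force κ κp i (restrLe Ms i), hPCohen i (Or.inr rfl), hAmem⟩
      · intro A hA
        exact ⟨Pstrat Force κ κp i (restrLe Ms i), hPCohen i (Or.inr rfl), hA⟩
    · -- measures P(κ) ∩ M_i
      intro A hAM hAκ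
      refine (hspec i (Or.inr rfl)).2.2 A hAκ ⟨i, Or.inr rfl, ?_⟩
      show A ∈ (if (i ∈ i ∨ i = i) then Ms i else ∅)
      rwa [if_pos (Or.inr rfl)]
    · -- increasing filters
      intro j hj A hA
      have hsub : Pstrat Force κ κp j (restrLe Ms j) ⊆
          Pstrat Force κ κp i (restrLe Ms i) := by
        have := (hspec i (Or.inr rfl)).2.1 j hj
        rwa [restrLe_restrLe hiord hj] at this
      exact hmono _ _ A (hPCohen j (Or.inl hj)) (hPCohen i (Or.inr rfl)) hsub hA
  · -- the judge wins
    intro hall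
    have hMscard : ∀ j, j ∈ κp → Cardinal.mk ↥(Ms j) ≤ zcard κ := fun j hj =>
      le_of_eq (hall j ((ZFSet.mem_toSet j κp).2 hj)).2.1.1.1
    have hspec : ∀ i, i ∈ κp →
        PstratSpec Force κ κp i (restrLe Ms i)
          (Pstrat Force κ κp i (restrLe Ms i)) := by
      intro i hi
      refine hstage i hi (fun j hj => hMscard j ?_)
      rcases hj with hj | rfl
      · exact hκpord.mem_trans hj hi
      · exact hi
    have hPCohen : ∀ i, i ∈ κp →
        Pstrat Force κ κp i (restrLe Ms i) ∈ CohenCond κ κp := fun i hi => (hspec i hi).1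
    have hFmono : ∀ j i, j ∈ κp → i ∈ κp → (j ∈ i ∨ j = i) → ∀ A : ZFSet.{u},
        Force (Pstrat Force κ κp j (restrLe Ms j)) A →
        Force (Pstrat Force κ κp i (restrLe Ms i)) A := by
      intro j i hjκp hiκp hj A hA
      rcases hj with hj | rfl
      · have hsub : Pstrat Force κ κp j (restrLe Ms j) ⊆
            Pstrat Force κ κp i (restrLe Ms i) := by
          have := (hspec i hiκp).2.1 j hj
          rwa [restrLe_restrLe (zOrd_mem hκpord hiκp) hj] at this
        exact hmono _ _ A (hPCohen j hjκp) (hPCohen i hiκp) hsub hA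
      · exact hA
    -- a bound for κ-many indices
    have hbound : ∀ {α : Type (u + 1)} (ι : α → ZFSet.{u}), Cardinal.mk α ≤ zcard κ →
        (∀ a, ι a ∈ κp) → ∃ i, i ∈ κp ∧ ∀ a, ι a ∈ i ∨ ι a = i := fun ι hα hι =>
      zbound hκp hsucc hunc ι hα hι
    refine ⟨?_, ?_, ?_⟩
    · -- the union is a filter
      refine zforce_filter Force hκ hunc hreg hstat hinter ?_ ?_
      · intro n A hAmem
        choose idx hidx1 hidx2 using fun k => Set.mem_iUnion₂.1 (hAmem k)
        have hfin : Cardinal.mk (ULift.{u + 1} (Fin n)) ≤ zcard κ :=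
          (Cardinal.lt_aleph0_of_finite _).le.trans hunc.le
        obtain ⟨istar, histar, hbnd⟩ := hbound (fun a : ULift.{u + 1} (Fin n) => idx a.down)
          hfin (fun a => (ZFSet.mem_toSet _ _).1 (hidx1 a.down))
        refine ⟨Pstrat Force κ κp istar (restrLe Ms istar), hPCohen istar histar, fun k => ?_⟩
        exact hFmono (idx k) istar ((ZFSet.mem_toSet _ _).1 (hidx1 k)) histar
          (hbnd ⟨k⟩) (A k) (hidx2 k)
      · intro A hA
        obtain ⟨i, hi, hAi⟩ := Set.mem_iUnion₂.1 hA
        exact ⟨Pstrat Force κ κp i (restrLe Ms i),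
          hPCohen i ((ZFSet.mem_toSet _ _).1 hi), hAi⟩
    · -- measures the union model
      intro A hAM hAκ
      obtain ⟨i, hi, hAi⟩ := Set.mem_iUnion₂.1 hAM
      have hiκp : i ∈ κp := (ZFSet.mem_toSet i κp).1 hi
      have hdec' := (hspec i hiκp).2.2 A hAκ ⟨i, Or.inr rfl, by
        show A ∈ (if (i ∈ i ∨ i = i) then Ms i else ∅)
        rwa [if_pos (Or.inr rfl)]⟩
      rcases hdec' with h | h
      · exact Or.inl (Set.mem_iUnion₂.2 ⟨i, hi, h⟩)
      · exact Or.inr (Set.mem_iUnion₂.2 ⟨i, hi, h⟩)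
    · -- closed under diagonal intersections
      intro m hm hcodes
      obtain ⟨⟨y, hfm⟩, hvals⟩ := hcodes
      set V : Set ZFSet.{u} := {v | ∃ b, b ∈ κ ∧ ZFSet.pair b v ∈ m} with hV
      have hVcard : Cardinal.mk ↥V ≤ zcard κ := by
        set w : ↥κ.toSet → ZFSet.{u} := fun b =>
          if h : ∃ v, ZFSet.pair (b : ZFSet.{u}) v ∈ m then h.choose else ∅ with hw
        have hVsub : V ⊆ Set.range w := by
          rintro v ⟨b, hbκ, hpv⟩
          have hex : ∃ v', ZFSet.pair b v' ∈ m := ⟨v, hpv⟩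
          have hwb : w ⟨b, (ZFSet.mem_toSet _ _).2 hbκ⟩ = hex.choose := dif_pos hex
          obtain ⟨v', hv', huniq⟩ := hfm.2 b hbκ
          refine ⟨⟨b, (ZFSet.mem_toSet _ _).2 hbκ⟩, ?_⟩
          rw [hwb, huniq _ hex.choose_spec, ← huniq _ hpv]
        exact le_trans (Cardinal.mk_le_mk_of_subset hVsub) Cardinal.mk_range_le
      have hch : ∀ v : ↥V, ∃ i, i ∈ κp.toSet ∧
          Force (Pstrat Force κ κp i (restrLe Ms i)) (v : ZFSet.{u}) := by
        rintro ⟨v, b, hbκ, hpv⟩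
        obtain ⟨i, hi, hvi⟩ := Set.mem_iUnion₂.1 (hvals b v hbκ hpv)
        exact ⟨i, hi, hvi⟩
      choose ι hι1 hι2 using hch
      obtain ⟨istar, histar, hbnd⟩ := hbound ι hVcard
        (fun v => (ZFSet.mem_toSet _ _).1 (hι1 v))
      have hforceall : ∀ b v, b ∈ κ → ZFSet.pair b v ∈ m →
          Force (Pstrat Force κ κp istar (restrLe Ms istar)) v := by
        intro b v hbκ hpv
        have hvV : v ∈ V := ⟨b, hbκ, hpv⟩
        exact hFmono (ι ⟨v, hvV⟩) istar ((ZFSet.mem_toSet _ _).1 (hι1 ⟨v, hvV⟩)) histar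
          (hbnd ⟨v, hvV⟩) v (hι2 ⟨v, hvV⟩)
      have hforce : Force (Pstrat Force κ κp istar (restrLe Ms istar)) (diagZ κ m) :=
        hdiag _ (hPCohen istar histar) m ⟨⟨y, hfm⟩, hforceall⟩
      exact Set.mem_iUnion₂.2 ⟨istar, (ZFSet.mem_toSet _ _).2 histar, hforce⟩
end
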